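/- arXiv:1902.10641 — 7 statements merged into one kernel-verified Lean document; each statement's English description precedes it below -/
import Mathlib

section
/- Let (C,T) be a minimal Cantor system that is locally radially shrinking. Then there exist a compact metric space Z, a continuous surjection F : Z → Z, and an isometric (or at least topological) embedding ι : C → Z with F ∘ ι = ι ∘ T, such that (Z,F) is locally radially shrinking, (Z,F) is not topologically transitive, and the set of periods of periodic points of F is unbounded (in particular F has infinitely many periodic points, with periods exceeding any given bound). -/
namespace MCL
open Function Set Topology Metric

/-- heights -/
noncomputable def hgt (s : ℕ → ℝ) (n k : ℕ) : ℝ := s n * (1 + 1/((k:ℝ)+2))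

variable {s : ℕ → ℝ}

lemma s_succ_le (hs4 : ∀ n, s (n+1) ≤ s n / 4) (hspos : ∀ n, 0 < s n) (n : ℕ) :
    s (n+1) ≤ s n := (hs4 n).trans (by linarith [hspos n])

lemma s_anti (hs4 : ∀ n, s (n+1) ≤ s n / 4) (hspos : ∀ n, 0 < s n) :
    Antitone s := antitone_nat_of_succ_le (s_succ_le hs4 hspos)

lemma hgt_gt (hspos : ∀ n, 0 < s n) (n k : ℕ) : s n < hgt s n k := by
  have h2 : (0:ℝ) < (k:ℝ) + 2 := by positivity
  have : (0:ℝ) < 1/((k:ℝ)+2) := by positivity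
  have := hspos n
  calc s n = s n * 1 := (mul_one _).symm
    _ < s n * (1 + 1/((k:ℝ)+2)) := by nlinarith

lemma hgt_pos (hspos : ∀ n, 0 < s n) (n k : ℕ) : 0 < hgt s n k :=
  (hspos n).trans (hgt_gt hspos n k)

lemma hgt_le (hspos : ∀ n, 0 < s n) (n k : ℕ) : hgt s n k ≤ (3/2) * s n := by
  have h0 : (0:ℝ) ≤ (k:ℝ) := Nat.cast_nonneg k
  have : 1/((k:ℝ)+2) ≤ 1/2 := by
    apply one_div_le_one_div_of_le <;> linarith
  have := hspos n
  unfold hgt; nlinarith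

lemma hgt_strict_anti (hspos : ∀ n, 0 < s n) {n k j : ℕ} (h : k < j) :
    hgt s n j < hgt s n k := by
  have hk : (k:ℝ) < (j:ℝ) := by exact_mod_cast h
  have h1 : (0:ℝ) ≤ (k:ℝ) := Nat.cast_nonneg k
  have : 1/((j:ℝ)+2) < 1/((k:ℝ)+2) := by
    apply one_div_lt_one_div_of_lt <;> linarith
  have := hspos n
  unfold hgt; nlinarith

/-- separation of levels: heights of level m>n lie strictly below s n -/
lemma hgt_level_sep (hs4 : ∀ n, s (n+1) ≤ s n / 4) (hspos : ∀ n, 0 < s n)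
    {n m : ℕ} (h : n < m) (k j : ℕ) : hgt s m j + (5/8) * s n ≤ hgt s n k := by
  have h1 : s m ≤ s (n+1) := s_anti hs4 hspos h
  have h2 : s (n+1) ≤ s n / 4 := hs4 n
  have h3 : hgt s m j ≤ (3/2) * s m := hgt_le hspos m j
  have h4 : s n < hgt s n k := hgt_gt hspos n k
  nlinarith [hspos m, hspos n]

/-- gap within a level -/
lemma hgt_gap (hspos : ∀ n, 0 < s n) {n k j Nn : ℕ} (hkj : k < j) (hj : j < Nn) :
    s n / (((Nn:ℝ)+3)^2) ≤ hgt s n k - hgt s n j := by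
  have hsn := hspos n
  have hk0 : (0:ℝ) ≤ (k:ℝ) := Nat.cast_nonneg k
  set a : ℝ := (k:ℝ) + 2 with ha
  set b : ℝ := (j:ℝ) + 2 with hb
  have hab : a + 1 ≤ b := by
    have : (k:ℝ) + 1 ≤ (j:ℝ) := by exact_mod_cast hkj
    rw [ha, hb]; linarith
  have ha2 : (2:ℝ) ≤ a := by rw [ha]; linarith
  have hbN : b ≤ (Nn:ℝ) + 3 := by
    have : (j:ℝ) + 1 ≤ (Nn:ℝ) := by exact_mod_cast hj
    rw [hb]; linarith
  have haN : a ≤ (Nn:ℝ) + 3 := by linarith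
  have h0a : (0:ℝ) < a := by linarith
  have h0b : (0:ℝ) < b := by linarith
  have key : 1/((Nn:ℝ)+3)^2 ≤ 1/a - 1/b := by
    have heq : 1/a - 1/b = (b - a)/(a*b) := by field_simp
    rw [heq]
    have hmul : a*b ≤ ((Nn:ℝ)+3)^2 := by nlinarith
    exact div_le_div₀ (by linarith) (by linarith) (by positivity) hmul
  have expand : hgt s n k - hgt s n j = s n * (1/a - 1/b) := by
    unfold hgt; rw [ha, hb]; ring
  rw [expand, div_eq_mul_one_div]
  exact mul_le_mul_of_nonneg_left key (le_of_lt hsn)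

end MCL

namespace MCL2
open MCL Function Set Topology Metric

lemma hgt_inj {s : ℕ → ℝ} (hs4 : ∀ n, s (n+1) ≤ s n / 4) (hspos : ∀ n, 0 < s n)
    {n k m j : ℕ} (h : hgt s n k = hgt s m j) : n = m ∧ k = j := by
  rcases lt_trichotomy n m with hnm | hnm | hnm
  · exfalso
    have := hgt_level_sep hs4 hspos hnm k j
    rw [h] at this; nlinarith [hspos n]
  · subst hnm
    refine ⟨rfl, ?_⟩
    rcases lt_trichotomy k j with hkj | hkj | hkj
    · exact absurd h (ne_of_gt (by simpa using hgt_strict_anti hspos hkj))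
    · exact hkj
    · exact absurd h (ne_of_lt (by simpa using hgt_strict_anti hspos hkj))
  · exfalso
    have := hgt_level_sep hs4 hspos hnm j k
    rw [h] at this; nlinarith [hspos m]

set_option linter.unusedSectionVars false

variable {C : Type u} [MetricSpace C]

structure Zt (C : Type u) (N : ℕ → ℕ) : Type u where
  val : C ⊕ (Σ n : ℕ, Fin (N n))

variable {N : ℕ → ℕ}

def zl (N : ℕ → ℕ) (c : C) : Zt C N := ⟨Sum.inl c⟩
def zr (q : Σ n : ℕ, Fin (N n)) : Zt C N := ⟨Sum.inr q⟩

noncomputable def emb (T : C → C) (p : C) (s : ℕ → ℝ) (z : Zt C N) : C × ℝ :=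
  Sum.elim (fun c => (c, 0)) (fun q : Σ n : ℕ, Fin (N n) =>
    (T^[(q.2:ℕ)+1] p, hgt s q.1 (q.2:ℕ))) z.val

@[simp] lemma emb_zl (T : C → C) (p : C) (s : ℕ → ℝ) (c : C) :
    emb T p s (zl N c) = (c, 0) := rfl

@[simp] lemma emb_zr (T : C → C) (p : C) (s : ℕ → ℝ) (q : Σ n : ℕ, Fin (N n)) :
    emb T p s (zr q) = (T^[(q.2:ℕ)+1] p, hgt s q.1 (q.2:ℕ)) := rfl

lemma zt_cases (z : Zt C N) : (∃ c, z = zl N c) ∨ ∃ q, z = zr q := by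
  obtain ⟨c | q⟩ := z
  · exact Or.inl ⟨c, rfl⟩
  · exact Or.inr ⟨q, rfl⟩

lemma emb_inj {T : C → C} {p : C} {s : ℕ → ℝ}
    (hs4 : ∀ n, s (n+1) ≤ s n / 4) (hspos : ∀ n, 0 < s n) :
    Function.Injective (emb T p s (N := N)) := by
  rintro ⟨c | ⟨n, k⟩⟩ ⟨c' | ⟨m, j⟩⟩ h
  · simpa [emb, Prod.ext_iff] using h
  · exfalso
    have h2 := congrArg Prod.snd h
    simp only [emb, Sum.elim_inl, Sum.elim_inr] at h2
    exact absurd h2.symm (ne_of_gt (hgt_pos hspos m (j:ℕ)))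
  · exfalso
    have h2 := congrArg Prod.snd h
    simp only [emb, Sum.elim_inl, Sum.elim_inr] at h2
    exact absurd h2 (ne_of_gt (hgt_pos hspos n (k:ℕ)))
  · have h2 := congrArg Prod.snd h
    simp only [emb, Sum.elim_inr] at h2
    obtain ⟨hnm, hkj⟩ := hgt_inj hs4 hspos h2
    subst hnm
    have : k = j := Fin.ext hkj
    subst this; rfl

def nxtF {N : ℕ → ℕ} {n : ℕ} (k : Fin (N n)) : Fin (N n) :=
  if h : (k:ℕ)+1 < N n then ⟨(k:ℕ)+1, h⟩ else ⟨0, k.pos⟩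

def FZ (T : C → C) (z : Zt C N) : Zt C N :=
  ⟨Sum.elim (fun c => Sum.inl (T c)) (fun q : Σ n : ℕ, Fin (N n) =>
    Sum.inr ⟨q.1, nxtF q.2⟩) z.val⟩

@[simp] lemma FZ_zl (T : C → C) (c : C) :
    FZ T (zl N c) = zl N (T c) := rfl

@[simp] lemma FZ_zr (T : C → C) (q : Σ n : ℕ, Fin (N n)) :
    FZ T (zr q : Zt C N) = zr ⟨q.1, nxtF q.2⟩ := rfl

lemma zl_inj : Function.Injective (zl (C := C) N) := by
  intro a b h
  simpa [zl, Zt.mk.injEq] using h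

lemma zl_ne_zr (c : C) (q : Σ n : ℕ, Fin (N n)) : zl N c ≠ zr q := by
  simp [zl, zr, Zt.mk.injEq]

lemma zr_inj_level {n : ℕ} {k j : Fin (N n)} (h : (zr ⟨n, k⟩ : Zt C N) = zr ⟨n, j⟩) :
    k = j := by
  simp only [zr, Zt.mk.injEq, Sum.inr.injEq, Sigma.mk.inj_iff, heq_eq_eq, true_and] at h
  exact h

lemma FZ_surj {T : C → C} (hT : Function.Surjective T) :
    Function.Surjective (FZ T (N := N)) := by
  rintro ⟨c | ⟨n, k⟩⟩
  · obtain ⟨c', rfl⟩ := hT c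
    exact ⟨zl N c', rfl⟩
  · by_cases h0 : (k:ℕ) = 0
    · refine ⟨zr ⟨n, ⟨N n - 1, by have := k.pos; omega⟩⟩, ?_⟩
      rw [FZ_zr]
      have heq : nxtF (⟨N n - 1, by have := k.pos; omega⟩ : Fin (N n)) = k := by
        simp only [nxtF]
        rw [dif_neg (by have := k.pos; omega)]
        ext; simp [h0]
      show (zr ⟨n, nxtF _⟩ : Zt C N) = ⟨Sum.inr ⟨n, k⟩⟩
      rw [heq]; rfl
    · refine ⟨zr ⟨n, ⟨(k:ℕ) - 1, by have := k.isLt; omega⟩⟩, ?_⟩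
      rw [FZ_zr]
      have heq : nxtF (⟨(k:ℕ) - 1, by have := k.isLt; omega⟩ : Fin (N n)) = k := by
        simp only [nxtF]
        rw [dif_pos (by have := k.isLt; omega)]
        ext; simp only; omega
      show (zr ⟨n, nxtF _⟩ : Zt C N) = ⟨Sum.inr ⟨n, k⟩⟩
      rw [heq]; rfl

lemma FZ_iter {T : C → C} {n : ℕ} (hpos : 0 < N n) (j : ℕ) :
    (FZ T (N := N))^[j] (zr ⟨n, ⟨0, hpos⟩⟩)
      = zr ⟨n, ⟨j % N n, Nat.mod_lt _ hpos⟩⟩ := by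
  induction j with
  | zero => simp [Nat.zero_mod]
  | succ j ih =>
    rw [Function.iterate_succ_apply', ih, FZ_zr]
    have heq : nxtF (⟨j % N n, Nat.mod_lt _ hpos⟩ : Fin (N n))
        = (⟨(j+1) % N n, Nat.mod_lt _ hpos⟩ : Fin (N n)) := by
      simp only [nxtF]
      split
      · next h =>
          ext; simp only
          rw [← Nat.mod_add_mod, Nat.mod_eq_of_lt h]
      · next h =>
          ext; simp only
          have h2 : j % N n + 1 = N n := by have := Nat.mod_lt j hpos; omega
          rw [← Nat.mod_add_mod, h2, Nat.mod_self]
    rw [heq]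

end MCL2

namespace MCL3
open MCL Function

noncomputable def sseq (r : ℕ → ℝ) : ℕ → ℝ
  | 0 => min (r 0) 1 / 4
  | (n+1) => min (sseq r n) (r (n+1)) / 4

lemma sseq_pos {r : ℕ → ℝ} (hr : ∀ n, 0 < r n) : ∀ n, 0 < sseq r n
  | 0 => by
      simp only [sseq]
      have h1 := hr 0
      have h2 := lt_min h1 one_pos
      linarith
  | (n+1) => by
      simp only [sseq]
      have := sseq_pos hr n
      have := hr (n+1)
      positivity

lemma sseq_quarter {r : ℕ → ℝ} (n : ℕ) : sseq r (n+1) ≤ sseq r n / 4 := by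
  simp only [sseq]
  have := min_le_left (sseq r n) (r (n+1))
  linarith

lemma sseq_le_r {r : ℕ → ℝ} (hr : ∀ n, 0 < r n) (n : ℕ) : sseq r n ≤ r n / 4 := by
  cases n with
  | zero => simp only [sseq]; have := min_le_left (r 0) 1; linarith
  | succ n => simp only [sseq]; have := min_le_right (sseq r n) (r (n+1)); linarith

lemma sseq_zero_le {r : ℕ → ℝ} : sseq r 0 ≤ 1/4 := by
  simp only [sseq]
  have := min_le_right (r 0) 1
  linarith

end MCL3


/-- A dynamical system on a metric space is *locally radially shrinking* (l.r.s.) if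
every point `x` has a radius `ε > 0` such that all points `y ≠ x` within distance `ε`
of `x` are moved strictly closer to the image of `x`: `d(T x, T y) < d(x, y)`. -/
def IsLocallyRadiallyShrinking {X : Type*} [MetricSpace X] (T : X → X) : Prop :=
  ∀ x : X, ∃ ε > 0, ∀ y : X, y ≠ x → dist x y < ε → dist (T x) (T y) < dist x y

open MCL MCL2 MCL3 Function Set Topology Metric in
/-- Every minimal Cantor l.r.s. system `(C, T)` extends to a non-transitive l.r.s.
system `(Z, F)` on a compact metric space, via a topological embedding `ι : C → Z`
with `F ∘ ι = ι ∘ T`, such that the set of (least) periods of periodic points of `F`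
is unbounded. -/
theorem minimal_Cantor_lrs_extends_to_unbounded_periods
    {C : Type u} [MetricSpace C] [CompactSpace C] [Nonempty C]
    [TotallyDisconnectedSpace C] (hperf : Perfect (Set.univ : Set C))
    (T : C → C) (hT : Continuous T)
    (hmin : ∀ x : C, Dense (Set.range fun n : ℕ => T^[n] x))
    (hlrs : IsLocallyRadiallyShrinking T) :
    ∃ (Z : Type u) (_ : MetricSpace Z), CompactSpace Z ∧
      ∃ F : Z → Z, Continuous F ∧ Function.Surjective F ∧
        (∃ ι : C → Z, Topology.IsEmbedding ι ∧ ∀ c : C, F (ι c) = ι (T c)) ∧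
        IsLocallyRadiallyShrinking F ∧
        ¬ (∃ z : Z, Dense (Set.range fun n : ℕ => F^[n] z)) ∧
        (∀ N : ℕ, ∃ p : Z, p ∈ Function.periodicPts F ∧
          N < Function.minimalPeriod F p) := by
  classical
  obtain ⟨p⟩ := ‹Nonempty C›
  -- every punctured neighborhood filter is nontrivial
  have hacc : ∀ x : C, (𝓝[≠] x).NeBot := by
    intro x
    have h1 : AccPt x (Filter.principal (univ : Set C)) := hperf.acc x (mem_univ x)
    rwa [AccPt, Filter.principal_univ, inf_top_eq] at h1
  -- every nonempty open set is infinite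
  have hinf : ∀ (U : Set C), IsOpen U → U.Nonempty → U.Infinite := by
    intro U hU ⟨u, hu⟩
    haveI := hacc u
    exact infinite_of_mem_nhds u (hU.mem_nhds hu)
  -- dense orbits enter open sets at arbitrarily late times
  have hlate : ∀ (x : C) (U : Set C), IsOpen U → U.Nonempty → ∀ m : ℕ,
      ∃ n : ℕ, m ≤ n ∧ T^[n] x ∈ U := by
    intro x U hU hUne m
    set A : Set C := (fun k => T^[k] x) '' (Iio m) with hA
    have hAfin : A.Finite := (Set.finite_Iio m).image _
    have hopen : IsOpen (U \ A) := hU.sdiff hAfin.isClosed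
    have hne : (U \ A).Nonempty := ((hinf U hU hUne).diff hAfin).nonempty
    obtain ⟨z, ⟨n, rfl⟩, hzU, hzA⟩ := (hmin x).exists_mem_open hopen hne
    refine ⟨n, ?_, hzU⟩
    by_contra hlt
    exact hzA ⟨n, show n < m by omega, rfl⟩
  -- the orbit of p is injective
  have hkey : ∀ i j : ℕ, i < j → T^[i] p = T^[j] p → False := by
    intro i j hij heq
    set A : Set C := (fun k => T^[k] p) '' (Iio j) with hA
    have hAfin : A.Finite := (Set.finite_Iio j).image _
    have hall : ∀ n : ℕ, T^[n] p ∈ A := by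
      intro n
      induction n using Nat.strong_induction_on with
      | _ n ih =>
        by_cases hn : n < j
        · exact ⟨n, hn, rfl⟩
        · push_neg at hn
          have h1 : T^[n] p = T^[(n-j)+i] p := by
            conv_lhs => rw [show n = (n - j) + j from by omega]
            rw [Function.iterate_add_apply, ← heq, ← Function.iterate_add_apply]
          have h2 : (n-j)+i < n := by omega
          rw [h1]
          exact ih _ h2
    have hsub : (Set.range fun n : ℕ => T^[n] p) ⊆ A := by rintro _ ⟨n, rfl⟩; exact hall n
    have huniv : (univ : Set C) ⊆ A := by
      have := (hmin p).closure_eq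
      calc (univ : Set C) = closure (Set.range fun n : ℕ => T^[n] p) := this.symm
        _ ⊆ closure A := closure_mono hsub
        _ = A := hAfin.isClosed.closure_eq
    exact (hinf univ isOpen_univ ⟨p, mem_univ p⟩).mono huniv (hAfin)
  have horb : ∀ i j : ℕ, T^[i] p = T^[j] p → i = j := by
    intro i j h
    rcases lt_trichotomy i j with h' | h' | h'
    · exact absurd h (fun hh => hkey i j h' hh)
    · exact h'
    · exact absurd h.symm (fun hh => hkey j i h' hh)
  -- T is surjective
  have hTsurj : Function.Surjective T := by
    have hcl : IsClosed (Set.range T) := (isCompact_range hT).isClosed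
    intro c
    have hsub : (Set.range fun n : ℕ => T^[n] (T p)) ⊆ Set.range T := by
      rintro _ ⟨n, rfl⟩
      exact ⟨T^[n] p, by rw [← Function.iterate_succ_apply' T n p, Function.iterate_succ_apply]⟩
    have : (univ : Set C) ⊆ Set.range T := by
      calc (univ : Set C) = closure (Set.range fun n : ℕ => T^[n] (T p)) :=
            ((hmin (T p)).closure_eq).symm
        _ ⊆ closure (Set.range T) := closure_mono hsub
        _ = Set.range T := hcl.closure_eq
    exact this (mem_univ c)
  -- the shrinking radius at p
  obtain ⟨εp, hεp, hshrink⟩ := hlrs p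
  -- choose the return times
  have hNex : ∀ n : ℕ, ∃ m : ℕ, n+1 ≤ m ∧ T^[m] p ∈ ball p (min εp (1/(n+1))) := by
    intro n
    have hpos : (0:ℝ) < min εp (1/(n+1)) := by
      have : (0:ℝ) < 1/((n:ℝ)+1) := by positivity
      exact lt_min hεp (by exact_mod_cast this)
    exact hlate p _ isOpen_ball ⟨p, mem_ball_self hpos⟩ (n+1)
  choose N hN1 hN2 using hNex
  set w : ℕ → C := fun n => T^[N n] p with hw
  set r : ℕ → ℝ := fun n => dist p (w n) with hr
  have hwp : ∀ n, w n ≠ p := by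
    intro n h
    have h0 : T^[N n] p = T^[0] p := h
    have h1 := horb _ _ h0
    have h2 := hN1 n
    omega
  have hrpos : ∀ n, 0 < r n := fun n => dist_pos.mpr fun h => hwp n h.symm
  have hrlt : ∀ n, r n < min εp (1/(n+1)) := by
    intro n
    have := hN2 n
    rw [mem_ball] at this
    simpa [hr, hw, dist_comm] using this
  have hrεp : ∀ n, r n < εp := fun n => (hrlt n).trans_le (min_le_left _ _)
  have hrn : ∀ n, r n < 1/((n:ℝ)+1) := by
    intro n
    have := (hrlt n).trans_le (min_le_right _ _)
    exact_mod_cast this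
  -- the scales
  set s : ℕ → ℝ := sseq r with hs
  have hspos : ∀ n, 0 < s n := sseq_pos hrpos
  have hs4 : ∀ n, s (n+1) ≤ s n / 4 := fun n => sseq_quarter n
  have hsanti : Antitone s := s_anti hs4 hspos
  have hsler : ∀ n, s n ≤ r n / 4 := sseq_le_r hrpos
  have hs14 : ∀ n, s n ≤ 1/4 := fun n => (hsanti (Nat.zero_le n)).trans sseq_zero_le
  -- the space
  set e : Zt C N → C × ℝ := emb T p s (N := N) with he
  have hinj : Function.Injective e := emb_inj hs4 hspos
  letI instZ : MetricSpace (Zt C N) := MetricSpace.induced e hinj inferInstance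
  have hdist : ∀ a b : Zt C N, dist a b = dist (e a) (e b) := fun a b => rfl
  have hisoe : Isometry e := Isometry.of_dist_eq fun a b => rfl
  have hembe : Topology.IsEmbedding e := hisoe.isEmbedding
  -- basic distance computations
  have hd_ll : ∀ c c' : C, dist (zl N c) (zl N c') = dist c c' := by
    intro c c'
    rw [hdist, Prod.dist_eq]
    simp only [he, emb_zl]
    rw [dist_self]
    exact max_eq_left dist_nonneg
  have hd_lr : ∀ (c : C) (m : ℕ) (j : Fin (N m)),
      dist (zl N c) (zr ⟨m, j⟩ : Zt C N)
        = max (dist c (T^[(j:ℕ)+1] p)) (hgt s m (j:ℕ)) := by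
    intro c m j
    rw [hdist, Prod.dist_eq]
    have h2 : dist (0:ℝ) (hgt s m (j:ℕ)) = hgt s m (j:ℕ) := by
      rw [Real.dist_eq, zero_sub, abs_neg, abs_of_pos (hgt_pos hspos m (j:ℕ))]
    simp only [he, emb_zl, emb_zr]
    rw [h2]
  -- second coordinates lower-bound distances
  have hsnd_lb : ∀ a b : Zt C N, dist (e a).2 (e b).2 ≤ dist a b := by
    intro a b
    rw [hdist, Prod.dist_eq]
    exact le_max_right _ _
  have hfst_lb : ∀ a b : Zt C N, dist (e a).1 (e b).1 ≤ dist a b := by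
    intro a b
    rw [hdist, Prod.dist_eq]
    exact le_max_left _ _
  have hNsq : ∀ n : ℕ, (9:ℝ) ≤ ((N n:ℝ)+3)^2 := by
    intro n
    have : (0:ℝ) ≤ (N n:ℝ) := Nat.cast_nonneg _
    nlinarith
  have hgappos : ∀ n : ℕ, 0 < s n / ((N n:ℝ)+3)^2 := by
    intro n
    have h1 := hspos n
    have h2 := hNsq n
    positivity
  have hgaple : ∀ n : ℕ, s n / ((N n:ℝ)+3)^2 ≤ (5/8) * s n := by
    intro n
    have h1 := hspos n
    have h2 := hNsq n
    rw [div_le_iff₀ (by nlinarith)]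
    nlinarith
  -- isolation of the periodic points
  have hisol : ∀ (n : ℕ) (k : Fin (N n)) (b : Zt C N), b ≠ zr ⟨n, k⟩ →
      s n / ((N n:ℝ)+3)^2 ≤ dist b (zr ⟨n, k⟩ : Zt C N) := by
    intro n k b hb
    refine le_trans ?_ (hsnd_lb b (zr ⟨n, k⟩))
    rcases zt_cases b with ⟨c, rfl⟩ | ⟨⟨m, j⟩, rfl⟩
    · simp only [he, emb_zl, emb_zr]
      rw [Real.dist_eq, zero_sub, abs_neg, abs_of_pos (hgt_pos hspos n (k:ℕ))]
      calc s n / ((N n:ℝ)+3)^2 ≤ (5/8) * s n := hgaple n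
        _ ≤ s n := by nlinarith [hspos n]
        _ ≤ hgt s n (k:ℕ) := (hgt_gt hspos n (k:ℕ)).le
    · simp only [he, emb_zr]
      rw [Real.dist_eq]
      rcases lt_trichotomy m n with hmn | hmn | hmn
      · have hsep := hgt_level_sep hs4 hspos hmn (j:ℕ) (k:ℕ)
        have hanti : s n ≤ s m := hsanti hmn.le
        have : s n / ((N n:ℝ)+3)^2 ≤ hgt s m (j:ℕ) - hgt s n (k:ℕ) := by
          have := hgaple n
          nlinarith
        exact this.trans (le_abs_self _)
      · subst hmn
        have hjk : j ≠ k := fun h => hb (by rw [h])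
        rcases lt_trichotomy (j:ℕ) (k:ℕ) with hh | hh | hh
        · have := hgt_gap hspos (n := m) hh k.isLt
          exact this.trans (le_abs_self _)
        · exact absurd (Fin.ext hh) hjk
        · have := hgt_gap hspos (n := m) hh j.isLt
          refine this.trans ?_
          rw [abs_sub_comm]
          exact le_abs_self _
      · have hsep := hgt_level_sep hs4 hspos hmn (k:ℕ) (j:ℕ)
        have : s n / ((N n:ℝ)+3)^2 ≤ hgt s n (k:ℕ) - hgt s m (j:ℕ) := by
          have := hgaple n
          nlinarith
        refine this.trans ?_
        rw [abs_sub_comm]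
        exact le_abs_self _
  -- the range of `e` is compact
  have hrange_closed : IsClosed (Set.range e) := by
    rw [← closure_subset_iff_isClosed]
    intro z hz
    rw [Metric.mem_closure_iff] at hz
    by_cases h0 : z.2 = 0
    · refine ⟨zl N z.1, ?_⟩
      simp only [he, emb_zl]
      exact Prod.ext rfl h0.symm
    · have hsndle : ∀ b : Zt C N, dist z.2 (e b).2 ≤ dist z (e b) := by
        intro b
        rw [Prod.dist_eq]
        exact le_max_right _ _
      have hz2pos : 0 < z.2 := by
        rcases lt_trichotomy z.2 0 with hneg | hzero | hpos
        · exfalso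
          obtain ⟨y, ⟨b, rfl⟩, hy⟩ := hz (-z.2) (by linarith)
          have h2 : dist z.2 (e b).2 < -z.2 := lt_of_le_of_lt (hsndle b) hy
          have h3 : 0 ≤ (e b).2 := by
            rcases zt_cases b with ⟨c, rfl⟩ | ⟨q, rfl⟩
            · simp [he]
            · simp only [he, emb_zr]
              exact (hgt_pos hspos _ _).le
          rw [Real.dist_eq, abs_sub_lt_iff] at h2
          linarith [h2.1]
        · exact absurd hzero h0
        · exact hpos
      obtain ⟨n₃, hn₃⟩ := exists_nat_one_div_lt (half_pos hz2pos)
      -- all points of the range close to z lie in a fixed finite set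
      set Pfin : Set (C × ℝ) :=
        ⋃ m ∈ Iic n₃, (fun j : ℕ => (T^[j+1] p, hgt s m j)) '' (Iio (N m)) with hPfin
      have hPfin_fin : Pfin.Finite :=
        (Set.finite_Iic n₃).biUnion fun m _ => (Set.finite_Iio (N m)).image _
      have hnear : ∀ b : Zt C N, dist z (e b) < z.2/2 → e b ∈ Pfin := by
        intro b hby
        rcases zt_cases b with ⟨c, rfl⟩ | ⟨⟨m, j⟩, rfl⟩
        · exfalso
          have h2 := lt_of_le_of_lt (hsndle (zl N c)) hby
          simp only [he, emb_zl] at h2 ⊢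
          rw [Real.dist_eq, sub_zero, abs_of_pos hz2pos] at h2
          linarith
        · have h2 := lt_of_le_of_lt (hsndle (zr ⟨m, j⟩)) hby
          simp only [he, emb_zr] at h2 ⊢
          rw [Real.dist_eq, abs_sub_lt_iff] at h2
          have hup : z.2/2 < hgt s m (j:ℕ) := by linarith [h2.1]
          have hm : m ≤ n₃ := by
            by_contra hmgt
            push_neg at hmgt
            have hb1 : hgt s m (j:ℕ) ≤ (3/2) * s m := hgt_le hspos m _
            have hb2 : s m ≤ r m / 4 := hsler m
            have hb3 : r m < 1/((m:ℝ)+1) := hrn m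
            have hb4 : 1/((m:ℝ)+1) ≤ 1/((n₃:ℝ)+1) := by
              apply one_div_le_one_div_of_le
              · positivity
              · have : (n₃:ℝ) ≤ (m:ℝ) := by exact_mod_cast hmgt.le
                linarith
            have := hn₃
            linarith
          exact Set.mem_biUnion hm ⟨(j:ℕ), j.isLt, rfl⟩
      have hzP : z ∈ Pfin := by
        have hcl : z ∈ closure Pfin := by
          rw [Metric.mem_closure_iff]
          intro ε hε
          obtain ⟨y, ⟨b, rfl⟩, hy⟩ := hz (min ε (z.2/2)) (lt_min hε (half_pos hz2pos))
          exact ⟨e b, hnear b (hy.trans_le (min_le_right _ _)),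
            hy.trans_le (min_le_left _ _)⟩
        rwa [hPfin_fin.isClosed.closure_eq] at hcl
      simp only [hPfin, Set.mem_iUnion] at hzP
      obtain ⟨m, hm, jj, hjlt, hjeq⟩ := hzP
      exact ⟨zr ⟨m, ⟨jj, hjlt⟩⟩, hjeq⟩
  have hrange_sub : Set.range e ⊆ (univ : Set C) ×ˢ Icc (0:ℝ) 1 := by
    rintro _ ⟨b, rfl⟩
    rcases zt_cases b with ⟨c, rfl⟩ | ⟨⟨m, j⟩, rfl⟩
    · simp [he]
    · simp only [he, emb_zr]
      refine ⟨mem_univ _, (hgt_pos hspos _ _).le, ?_⟩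
      have h1 := hgt_le hspos m (j:ℕ)
      have h2 := hs14 m
      linarith
  have hrange_cpt : IsCompact (Set.range e) :=
    (isCompact_univ.prod isCompact_Icc).of_isClosed_subset hrange_closed hrange_sub
  have hZcompact : CompactSpace (Zt C N) := by
    rw [← isCompact_univ_iff, hembe.isCompact_iff, Set.image_univ]
    exact hrange_cpt
  refine ⟨Zt C N, instZ, hZcompact, FZ T, ?_, FZ_surj hTsurj,
    ⟨zl N, (Isometry.of_dist_eq hd_ll).isEmbedding, fun c => rfl⟩, ?_, ?_, ?_⟩
  · -- continuity of F
    rw [Metric.continuous_iff]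
    intro b ε hε
    rcases zt_cases b with ⟨c, rfl⟩ | ⟨⟨n, k⟩, rfl⟩
    · -- at a base point
      obtain ⟨δ₁, hδ₁pos, hδ₁⟩ := Metric.continuous_iff.mp hT c (ε/3) (by positivity)
      obtain ⟨n₂, hn₂⟩ := exists_nat_one_div_lt (show (0:ℝ) < ε/3 by positivity)
      refine ⟨min δ₁ (s n₂), lt_min hδ₁pos (hspos n₂), ?_⟩
      intro a ha
      rcases zt_cases a with ⟨c', rfl⟩ | ⟨⟨m, j⟩, rfl⟩
      · rw [hd_ll] at ha
        simp only [FZ_zl]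
        rw [hd_ll]
        have h1 : dist c' c < δ₁ := ha.trans_le (min_le_left _ _)
        have := hδ₁ c' h1
        linarith
      · rw [dist_comm, hd_lr] at ha
        have hfst : dist c (T^[(j:ℕ)+1] p) < δ₁ :=
          ((le_max_left _ _).trans_lt ha).trans_le (min_le_left _ _)
        have hsnd : hgt s m (j:ℕ) < s n₂ :=
          ((le_max_right _ _).trans_lt ha).trans_le (min_le_right _ _)
        have hmgt : n₂ < m := by
          by_contra hh
          push_neg at hh
          have := hsanti hh
          have := hgt_gt hspos m (j:ℕ)
          linarith
        have hsmall : r m < ε/3 := by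
          have h3 : r m < 1/((m:ℝ)+1) := hrn m
          have h4 : 1/((m:ℝ)+1) ≤ 1/((n₂:ℝ)+1) := by
            apply one_div_le_one_div_of_le
            · positivity
            · have : (n₂:ℝ) ≤ (m:ℝ) := by exact_mod_cast hmgt.le
              linarith
          linarith
        have hhgt_small : ∀ i : ℕ, hgt s m i < ε/3 := by
          intro i
          have h1 := hgt_le hspos m i
          have h2 := hsler m
          linarith
        simp only [FZ_zl, FZ_zr]
        rw [dist_comm, hd_lr]
        apply max_lt
        · by_cases hcase : (j:ℕ)+1 < N m
          · have hnv : ((nxtF j : Fin (N m)):ℕ) = (j:ℕ)+1 := by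
              simp [nxtF, dif_pos hcase]
            rw [hnv, Function.iterate_succ_apply' T ((j:ℕ)+1) p]
            have := hδ₁ (T^[(j:ℕ)+1] p) (by rwa [dist_comm])
            rw [dist_comm] at this
            linarith
          · have hnv : ((nxtF j : Fin (N m)):ℕ) = 0 := by
              simp [nxtF, dif_neg hcase]
            have hj1 : (j:ℕ)+1 = N m := by have := j.isLt; omega
            rw [hnv]
            have h5 : dist (T c) (T^[0+1] p) ≤
                dist (T c) (T (T^[(j:ℕ)+1] p)) + dist (T (T^[(j:ℕ)+1] p)) (T^[0+1] p) :=
              dist_triangle _ _ _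
            have h6 : dist (T c) (T (T^[(j:ℕ)+1] p)) < ε/3 := by
              rw [dist_comm]
              exact hδ₁ _ (by rwa [dist_comm])
            have h7 : dist (T (T^[(j:ℕ)+1] p)) (T^[0+1] p) < ε/3 := by
              have hwm : T^[(j:ℕ)+1] p = w m := by rw [hj1]
              rw [hwm, zero_add, Function.iterate_one]
              have := hshrink (w m) (hwp m) ((hrεp m))
              calc dist (T (w m)) (T p) = dist (T p) (T (w m)) := dist_comm _ _
                _ < dist p (w m) := this
                _ < ε/3 := hsmall
            calc dist (T c) (T^[0+1] p) ≤ _ + _ := h5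
              _ < ε/3 + ε/3 := by exact add_lt_add h6 h7
              _ < ε := by linarith
        · exact (hhgt_small _).trans_le (by linarith)
    · -- at an isolated periodic point
      refine ⟨s n / ((N n:ℝ)+3)^2, hgappos n, ?_⟩
      intro a ha
      have : a = zr ⟨n, k⟩ := by
        by_contra hne
        exact absurd ha (not_lt.mpr (hisol n k a hne))
      rw [this, dist_self]
      exact hε
  · -- F is locally radially shrinking
    intro b
    rcases zt_cases b with ⟨c, rfl⟩ | ⟨⟨n, k⟩, rfl⟩
    · by_cases hcp : c = p
      · rw [hcp]
        refine ⟨εp, hεp, ?_⟩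
        intro y hy hd
        rcases zt_cases y with ⟨c', rfl⟩ | ⟨⟨m, j⟩, rfl⟩
        · have hc' : c' ≠ p := fun h => hy (by rw [h])
          rw [hd_ll] at hd
          simp only [FZ_zl]
          rw [hd_ll, hd_ll]
          exact hshrink c' hc' hd
        · rw [hd_lr] at hd
          simp only [FZ_zl, FZ_zr]
          rw [hd_lr, hd_lr]
          have hDhgt : 0 < hgt s m (j:ℕ) := hgt_pos hspos m _
          by_cases hcase : (j:ℕ)+1 < N m
          · have hnv : ((nxtF j : Fin (N m)):ℕ) = (j:ℕ)+1 := by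
              simp [nxtF, dif_pos hcase]
            rw [hnv]
            apply max_lt
            · rw [Function.iterate_succ_apply' T ((j:ℕ)+1) p]
              have hne : T^[(j:ℕ)+1] p ≠ p := by
                intro hh
                have h0 : T^[(j:ℕ)+1] p = T^[0] p := hh
                have := horb _ _ h0
                omega
              have hlt : dist p (T^[(j:ℕ)+1] p) < εp :=
                (le_max_left _ _).trans_lt hd
              have := hshrink _ hne hlt
              exact this.trans_le (le_max_left _ _)
            · have := hgt_strict_anti hspos (n := m) (Nat.lt_succ_self (j:ℕ))
              exact this.trans_le (le_max_right _ _)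
          · have hnv : ((nxtF j : Fin (N m)):ℕ) = 0 := by
              simp [nxtF, dif_neg hcase]
            have hj1 : (j:ℕ)+1 = N m := by have := j.isLt; omega
            rw [hnv]
            apply max_lt
            · rw [zero_add, Function.iterate_one, dist_self]
              exact lt_of_lt_of_le hDhgt (le_max_right _ _)
            · have h1 : hgt s m 0 ≤ (3/2) * s m := hgt_le hspos m 0
              have h2 : s m ≤ r m / 4 := hsler m
              have h3 : r m = dist p (T^[(j:ℕ)+1] p) := by rw [hj1]
              have h4 : hgt s m 0 < dist p (T^[(j:ℕ)+1] p) := by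
                rw [← h3]; have := hrpos m; linarith
              exact h4.trans_le (le_max_left _ _)
      · obtain ⟨εc, hεcpos, hshrc⟩ := hlrs c
        have hcppos : 0 < dist c p := dist_pos.mpr hcp
        obtain ⟨m₀, hm₀⟩ := exists_nat_one_div_lt (half_pos hcppos)
        refine ⟨min (min εc (dist c p/2)) (s m₀),
          lt_min (lt_min hεcpos (half_pos hcppos)) (hspos m₀), ?_⟩
        intro y hy hd
        rcases zt_cases y with ⟨c', rfl⟩ | ⟨⟨m, j⟩, rfl⟩
        · have hc' : c' ≠ c := fun h => hy (by rw [h])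
          rw [hd_ll] at hd
          simp only [FZ_zl]
          rw [hd_ll, hd_ll]
          exact hshrc c' hc' (hd.trans_le ((min_le_left _ _).trans (min_le_left _ _)))
        · rw [hd_lr] at hd
          have hDhgt : 0 < hgt s m (j:ℕ) := hgt_pos hspos m _
          have hhj : hgt s m (j:ℕ) < s m₀ :=
            (le_max_right _ _).trans_lt (hd.trans_le (min_le_right _ _))
          have hmgt : m₀ < m := by
            by_contra hh
            push_neg at hh
            have := hsanti hh
            have := hgt_gt hspos m (j:ℕ)
            linarith
          simp only [FZ_zl, FZ_zr]
          rw [hd_lr, hd_lr]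
          by_cases hcase : (j:ℕ)+1 < N m
          · have hnv : ((nxtF j : Fin (N m)):ℕ) = (j:ℕ)+1 := by
              simp [nxtF, dif_pos hcase]
            rw [hnv]
            apply max_lt
            · rw [Function.iterate_succ_apply' T ((j:ℕ)+1) p]
              by_cases hqc : T^[(j:ℕ)+1] p = c
              · rw [hqc, dist_self]
                exact lt_of_lt_of_le hDhgt (le_max_right _ _)
              · have hlt : dist c (T^[(j:ℕ)+1] p) < εc :=
                  ((le_max_left _ _).trans_lt hd).trans_le
                    ((min_le_left _ _).trans (min_le_left _ _))
                exact (hshrc _ hqc hlt).trans_le (le_max_left _ _)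
            · have := hgt_strict_anti hspos (n := m) (Nat.lt_succ_self (j:ℕ))
              exact this.trans_le (le_max_right _ _)
          · exfalso
            have hj1 : (j:ℕ)+1 = N m := by have := j.isLt; omega
            have hq : dist c (T^[(j:ℕ)+1] p) < dist c p / 2 :=
              ((le_max_left _ _).trans_lt hd).trans_le
                ((min_le_left _ _).trans (min_le_right _ _))
            have hwm : T^[(j:ℕ)+1] p = w m := by rw [hj1]
            have hrm : r m < dist c p / 2 := by
              have h3 : r m < 1/((m:ℝ)+1) := hrn m
              have h4 : 1/((m:ℝ)+1) ≤ 1/((m₀:ℝ)+1) := by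
                apply one_div_le_one_div_of_le
                · positivity
                · have : (m₀:ℝ) ≤ (m:ℝ) := by exact_mod_cast hmgt.le
                  linarith
              linarith
            have htri : dist c p ≤ dist c (w m) + dist (w m) p := dist_triangle _ _ _
            rw [hwm] at hq
            rw [dist_comm] at hrm
            have : dist (w m) p = dist p (w m) := dist_comm _ _
            have hrm' : dist (w m) p < dist c p / 2 := by rw [this]; rwa [dist_comm] at hrm
            linarith
    · -- isolated points: vacuous
      refine ⟨s n / ((N n:ℝ)+3)^2, hgappos n, ?_⟩
      intro y hy hd
      exfalso
      have := hisol n k y hy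
      rw [dist_comm] at hd
      linarith
  · -- not topologically transitive
    rintro ⟨z, hz⟩
    have hbase_closed : IsClosed {a : Zt C N | (e a).2 = 0} := by
      have : {a : Zt C N | (e a).2 = 0} = (fun a : Zt C N => (e a).2) ⁻¹' {0} := rfl
      rw [this]
      exact IsClosed.preimage (continuous_snd.comp hisoe.continuous) isClosed_singleton
    rcases zt_cases z with ⟨c, rfl⟩ | ⟨⟨n, k⟩, rfl⟩
    · have horbit : ∀ m : ℕ, (FZ T)^[m] (zl N c) = zl N (T^[m] c) := by
        intro m
        induction m with
        | zero => rfl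
        | succ m ih =>
          rw [Function.iterate_succ_apply', ih, FZ_zl, Function.iterate_succ_apply']
      have hsub : (Set.range fun m : ℕ => (FZ T)^[m] (zl N c)) ⊆ {a | (e a).2 = 0} := by
        rintro _ ⟨m, rfl⟩
        simp only [mem_setOf_eq, horbit m, he, emb_zl]
      have huniv : (univ : Set (Zt C N)) ⊆ {a | (e a).2 = 0} := by
        calc (univ : Set (Zt C N))
            = closure (Set.range fun m : ℕ => (FZ T)^[m] (zl N c)) := hz.closure_eq.symm
          _ ⊆ closure {a : Zt C N | (e a).2 = 0} := closure_mono hsub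
          _ = {a : Zt C N | (e a).2 = 0} := hbase_closed.closure_eq
      have hzr : (zr ⟨0, ⟨0, by have := hN1 0; omega⟩⟩ : Zt C N) ∈ {a : Zt C N | (e a).2 = 0} :=
        huniv (mem_univ _)
      simp only [mem_setOf_eq, he, emb_zr] at hzr
      exact absurd hzr (ne_of_gt (hgt_pos hspos 0 0))
    · set L : Set (Zt C N) := Set.range (fun j : Fin (N n) => (zr ⟨n, j⟩ : Zt C N)) with hL
      have hLfin : L.Finite := Set.finite_range _
      have horbit : ∀ m : ℕ, (FZ T)^[m] (zr ⟨n, k⟩) ∈ L := by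
        intro m
        induction m with
        | zero => exact ⟨k, rfl⟩
        | succ m ih =>
          obtain ⟨j, hj⟩ := ih
          rw [Function.iterate_succ_apply', ← hj, FZ_zr]
          exact ⟨nxtF j, rfl⟩
      have hsub : (Set.range fun m : ℕ => (FZ T)^[m] (zr ⟨n, k⟩)) ⊆ L := by
        rintro _ ⟨m, rfl⟩
        exact horbit m
      have huniv : (univ : Set (Zt C N)) ⊆ L := by
        calc (univ : Set (Zt C N))
            = closure (Set.range fun m : ℕ => (FZ T)^[m] (zr ⟨n, k⟩)) := hz.closure_eq.symm
          _ ⊆ closure L := closure_mono hsub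
          _ = L := hLfin.isClosed.closure_eq
      obtain ⟨j, hj⟩ := huniv (mem_univ (zl N p))
      exact zl_ne_zr p ⟨n, j⟩ hj.symm
  · -- unbounded minimal periods
    intro M
    have hpos : 0 < N M := by have := hN1 M; omega
    refine ⟨zr ⟨M, ⟨0, hpos⟩⟩, ?_, ?_⟩
    · rw [Function.mem_periodicPts]
      refine ⟨N M, hpos, ?_⟩
      show (FZ T)^[N M] _ = _
      rw [FZ_iter hpos]
      have : (⟨N M % N M, Nat.mod_lt _ hpos⟩ : Fin (N M)) = ⟨0, hpos⟩ :=
        Fin.ext (Nat.mod_self _)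
      rw [this]
    · have hper : Function.IsPeriodicPt (FZ T) (N M) (zr ⟨M, ⟨0, hpos⟩⟩ : Zt C N) := by
        show (FZ T)^[N M] _ = _
        rw [FZ_iter hpos]
        have : (⟨N M % N M, Nat.mod_lt _ hpos⟩ : Fin (N M)) = ⟨0, hpos⟩ :=
          Fin.ext (Nat.mod_self _)
        rw [this]
      set mp := Function.minimalPeriod (FZ T) (zr ⟨M, ⟨0, hpos⟩⟩ : Zt C N) with hmp
      have hdvd : mp ∣ N M := hper.minimalPeriod_dvd
      have hmpos : 0 < mp := hper.minimalPeriod_pos hpos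
      have hper' : Function.IsPeriodicPt (FZ T) mp (zr ⟨M, ⟨0, hpos⟩⟩ : Zt C N) :=
        Function.isPeriodicPt_minimalPeriod _ _
      have heq2 : (zr ⟨M, ⟨mp % N M, Nat.mod_lt _ hpos⟩⟩ : Zt C N) = zr ⟨M, ⟨0, hpos⟩⟩ := by
        rw [← FZ_iter hpos mp]
        exact hper'
      have hval : mp % N M = 0 := by
        have := zr_inj_level heq2
        exact congrArg Fin.val this
      have hdvd2 : N M ∣ mp := Nat.dvd_of_mod_eq_zero hval
      have : mp = N M := Nat.dvd_antisymm hdvd hdvd2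
      rw [this]
      have := hN1 M
      omega
end

section
/- Suppose (X,T) is a locally radially shrinking system and x ∈ X is not a periodic point. Then the generalized α-limit set α(x) = ⋂ₙ closure({y ∈ X : Tⁱ(y) = x for some i ≥ n}) contains no periodic point of T. In particular, α(x) contains an infinite minimal subsystem (a nonempty closed T-invariant subset that is minimal for T and is infinite). -/
/-- The generalized α-limit set of `x`:
`α(x) = ⋂ₙ closure {y : Tⁱ(y) = x for some i ≥ n}`. -/
def genAlphaLimit {X : Type*} [MetricSpace X] (T : X → X) (x : X) : Set X :=
  ⋂ n : ℕ, closure {y : X | ∃ i : ℕ, n ≤ i ∧ T^[i] y = x}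

/-- One full period of a locally radially shrinking map around a periodic point `p`
does not increase the distance to `p`, for points within the uniform radius `ε₀`. -/
private lemma lrs_cycle_shrink {X : Type*} [MetricSpace X] (T : X → X)
    (E : X → ℝ)
    (hE' : ∀ z y, y ≠ z → dist z y < E z → dist (T z) (T y) < dist z y)
    (p : X) (k : ℕ) (hp : T^[k] p = p)
    (ε₀ : ℝ) (hε₀ : ∀ j, j < k → ε₀ ≤ E (T^[j] p)) :
    ∀ y : X, dist p y < ε₀ → dist p (T^[k] y) ≤ dist p y := by
  intro y hy
  have main : ∀ j, j ≤ k → dist (T^[j] p) (T^[j] y) ≤ dist p y := by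
    intro j
    induction j with
    | zero => intro _; simp
    | succ j ih =>
      intro hj
      have hj' : j < k := Nat.lt_of_succ_le hj
      have h1 := ih hj'.le
      rw [Function.iterate_succ_apply', Function.iterate_succ_apply']
      by_cases h : T^[j] y = T^[j] p
      · rw [h, dist_self]
        exact le_trans dist_nonneg h1
      · exact le_trans
          (hE' _ _ h (lt_of_le_of_lt h1 (lt_of_lt_of_le hy (hε₀ j hj')))).le h1
  have := main k le_rfl
  rwa [hp] at this

private lemma lrs_cycle_shrink_iter {X : Type*} [MetricSpace X] (T : X → X)
    (E : X → ℝ)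
    (hE' : ∀ z y, y ≠ z → dist z y < E z → dist (T z) (T y) < dist z y)
    (p : X) (k : ℕ) (hp : T^[k] p = p)
    (ε₀ : ℝ) (hε₀ : ∀ j, j < k → ε₀ ≤ E (T^[j] p)) :
    ∀ y : X, dist p y < ε₀ → ∀ m : ℕ, dist p ((T^[k])^[m] y) ≤ dist p y := by
  intro y hy m
  induction m with
  | zero => simp
  | succ m ih =>
    rw [Function.iterate_succ_apply']
    exact le_trans
      (lrs_cycle_shrink T E hE' p k hp ε₀ hε₀ _ (lt_of_le_of_lt ih hy)) ih

/-- The generalized α-limit set of a non-periodic point contains no periodic point. -/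
private lemma no_periodic_in_genAlphaLimit {X : Type*} [MetricSpace X]
    (T : X → X) (hT : Continuous T)
    (hlrs : IsLocallyRadiallyShrinking T)
    (x : X) (hx : ∀ k : ℕ, 1 ≤ k → T^[k] x ≠ x) :
    ∀ p ∈ genAlphaLimit T x, ∀ k : ℕ, 1 ≤ k → T^[k] p ≠ p := by
  intro p hp k hk hper
  choose E hEpos hE' using hlrs
  have hkpos : 0 < k := hk
  have hne : (Finset.range k).Nonempty := ⟨0, Finset.mem_range.mpr hkpos⟩
  set ε₀ : ℝ := (Finset.range k).inf' hne (fun j => E (T^[j] p)) with hε₀def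
  have hε₀pos : 0 < ε₀ := by
    rw [hε₀def, Finset.lt_inf'_iff]
    exact fun j _ => hEpos _
  have hε₀le : ∀ j, j < k → ε₀ ≤ E (T^[j] p) := by
    intro j hj
    exact Finset.inf'_le _ (Finset.mem_range.mpr hj)
  have hp0 : p ∈ closure {y : X | ∃ i : ℕ, 0 ≤ i ∧ T^[i] y = x} :=
    Set.mem_iInter.mp hp 0
  have hseq : ∀ n : ℕ, ∃ y : X, ∃ i : ℕ, T^[i] y = x ∧
      dist p y < min ε₀ (1 / (n + 1)) := by
    intro n
    have hδ : 0 < min ε₀ (1 / ((n : ℝ) + 1)) := by positivity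
    obtain ⟨y, hy1, hy2⟩ := Metric.mem_closure_iff.mp hp0 _ hδ
    obtain ⟨i, -, hi2⟩ := hy1
    exact ⟨y, i, hi2, hy2⟩
  choose y i hix hyd using hseq
  -- the decomposition point: z n is obtained from y n by whole periods
  set z : ℕ → X := fun n => (T^[k])^[i n / k] (y n) with hz
  have hxz : ∀ n, T^[i n % k] (z n) = x := by
    intro n
    rw [hz]
    simp only []
    rw [← Function.iterate_mul, ← Function.iterate_add_apply, Nat.mod_add_div]
    exact hix n
  have hdz : ∀ n, dist p (z n) ≤ dist p (y n) :=
    fun n => lrs_cycle_shrink_iter T E hE' p k hper ε₀ hε₀le (y n)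
      (lt_of_lt_of_le (hyd n) (min_le_left _ _)) _
  -- pigeonhole on the remainders
  obtain ⟨r, hr⟩ := Finite.exists_infinite_fiber
    (fun n : ℕ => (⟨i n % k, Nat.mod_lt _ hkpos⟩ : Fin k))
  have hrinf : ((fun n : ℕ => (⟨i n % k, Nat.mod_lt _ hkpos⟩ : Fin k)) ⁻¹'
      {r}).Infinite := Set.infinite_coe_iff.mp hr
  -- the limit identity
  have key : T^[(r : ℕ)] p = x := by
    by_contra hne'
    have hδpos : 0 < dist (T^[(r : ℕ)] p) x := dist_pos.mpr hne'
    have hcont : ContinuousAt (T^[(r : ℕ)]) p := (hT.iterate _).continuousAt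
    obtain ⟨η, hηpos, hη⟩ :=
      Metric.continuousAt_iff.mp hcont _ hδpos
    obtain ⟨N, hN⟩ := exists_nat_gt (1 / η)
    obtain ⟨n, hn_mem, hnN⟩ := hrinf.exists_gt N
    have hmod : i n % k = (r : ℕ) := by
      have := hn_mem
      simp only [Set.mem_preimage, Set.mem_singleton_iff] at this
      exact congrArg Fin.val this
    have h1n : (1 : ℝ) / (n + 1) < η := by
      rw [div_lt_iff₀ (by positivity)]
      have hn1 : (1 : ℝ) / η < n + 1 := by
        have : (N : ℝ) < (n : ℝ) + 1 := by exact_mod_cast Nat.lt_succ_of_lt hnN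
        linarith
      calc (1 : ℝ) = η * (1 / η) := by field_simp
        _ < η * (n + 1) := by
            apply mul_lt_mul_of_pos_left hn1 hηpos
    have hdistz : dist (z n) p < η := by
      rw [dist_comm]
      calc dist p (z n) ≤ dist p (y n) := hdz n
        _ < min ε₀ (1 / (n + 1)) := hyd n
        _ ≤ 1 / (n + 1) := min_le_right _ _
        _ < η := h1n
    have := hη hdistz
    rw [← hmod, hxz n] at this
    rw [dist_comm] at this
    exact lt_irrefl _ this
  -- conclude that x is periodic, contradiction
  have hxper : T^[k] x = x := by
    conv_lhs => rw [← key]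
    rw [← Function.iterate_add_apply,
      show k + (r : ℕ) = (r : ℕ) + k from Nat.add_comm _ _,
      Function.iterate_add_apply, hper, key]
  exact hx k hk hxper

/-- Let `(X, T)` be an l.r.s. system (on a compact metric space, `T` a continuous
surjection) and let `x ∈ X` be a non-periodic point.  Then the generalized α-limit set
`α(x)` contains no periodic point of `T`; in particular, `α(x)` contains an infinite
minimal subsystem. -/
theorem genAlphaLimit_no_periodic_points_of_lrs
    {X : Type*} [MetricSpace X] [CompactSpace X] [Nonempty X]
    (T : X → X) (hT : Continuous T) (hsurj : Function.Surjective T)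
    (hlrs : IsLocallyRadiallyShrinking T)
    (x : X) (hx : ∀ k : ℕ, 1 ≤ k → T^[k] x ≠ x) :
    (∀ p ∈ genAlphaLimit T x, ∀ k : ℕ, 1 ≤ k → T^[k] p ≠ p) ∧
    ∃ M : Set X, M ⊆ genAlphaLimit T x ∧ M.Nonempty ∧ IsClosed M ∧
      Set.MapsTo T M M ∧ M.Infinite ∧
      (∀ M' : Set X, M' ⊆ M → M'.Nonempty → IsClosed M' → Set.MapsTo T M' M' →
        M' = M) := by
  have hnoper := no_periodic_in_genAlphaLimit T hT hlrs x hx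
  refine ⟨hnoper, ?_⟩
  set A : ℕ → Set X := fun n => closure {y : X | ∃ i : ℕ, n ≤ i ∧ T^[i] y = x}
    with hA
  have hAclosed : ∀ n, IsClosed (A n) := fun n => isClosed_closure
  have hAnon : ∀ n, (A n).Nonempty := by
    intro n
    obtain ⟨y, hy⟩ := hsurj.iterate n x
    exact ⟨y, subset_closure ⟨n, le_rfl, hy⟩⟩
  have hAmono : ∀ n, A (n + 1) ⊆ A n := by
    intro n
    apply closure_mono
    rintro y ⟨j, hj, hyj⟩
    exact ⟨j, le_trans (Nat.le_succ n) hj, hyj⟩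
  have hαeq : genAlphaLimit T x = ⋂ n, A n := rfl
  have hαclosed : IsClosed (genAlphaLimit T x) := by
    rw [hαeq]; exact isClosed_iInter hAclosed
  have hαnon : (genAlphaLimit T x).Nonempty := by
    rw [hαeq]
    exact IsCompact.nonempty_iInter_of_sequence_nonempty_isCompact_isClosed
      A hAmono hAnon (hAclosed 0).isCompact hAclosed
  have hαmaps : Set.MapsTo T (genAlphaLimit T x) (genAlphaLimit T x) := by
    intro p hp
    rw [hαeq, Set.mem_iInter] at hp ⊢
    intro n
    have h1 : p ∈ A (n + 1) := hp (n + 1)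
    have himg : T '' {y : X | ∃ i : ℕ, n + 1 ≤ i ∧ T^[i] y = x} ⊆
        {y : X | ∃ i : ℕ, n ≤ i ∧ T^[i] y = x} := by
      rintro _ ⟨y, ⟨j, hj, hyj⟩, rfl⟩
      refine ⟨j - 1, by omega, ?_⟩
      have hjj : j - 1 + 1 = j := by omega
      rw [← hjj, Function.iterate_succ_apply] at hyj
      exact hyj
    have h2 : T p ∈ closure (T '' {y : X | ∃ i : ℕ, n + 1 ≤ i ∧ T^[i] y = x}) :=
      image_closure_subset_closure_image hT (Set.mem_image_of_mem T h1)
    exact closure_mono himg h2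
  -- Zorn's lemma for a minimal subsystem
  set C : Set (Set X) := {B | B ⊆ genAlphaLimit T x ∧ B.Nonempty ∧
    IsClosed B ∧ Set.MapsTo T B B} with hC
  have hαC : genAlphaLimit T x ∈ C := ⟨subset_rfl, hαnon, hαclosed, hαmaps⟩
  have hchain : ∀ c ⊆ C, IsChain (· ⊆ ·) c → ∃ lb ∈ C, ∀ s ∈ c, lb ⊆ s := by
    intro c hcC hch
    rcases c.eq_empty_or_nonempty with rfl | ⟨s₀, hs₀⟩
    · exact ⟨genAlphaLimit T x, hαC, by simp⟩
    refine ⟨⋂₀ c, ⟨?_, ?_, ?_, ?_⟩, fun s hs => Set.sInter_subset_of_mem hs⟩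
    · exact (Set.sInter_subset_of_mem hs₀).trans (hcC hs₀).1
    · haveI : Nonempty c := ⟨⟨s₀, hs₀⟩⟩
      have hne : (⋂ s : c, (s : Set X)).Nonempty := by
        apply IsCompact.nonempty_iInter_of_directed_nonempty_isCompact_isClosed
        · rintro ⟨a, ha⟩ ⟨b, hb⟩
          rcases eq_or_ne a b with rfl | hab
          · exact ⟨⟨a, ha⟩, subset_rfl, subset_rfl⟩
          rcases hch ha hb hab with h | h
          · exact ⟨⟨a, ha⟩, subset_rfl, h⟩
          · exact ⟨⟨b, hb⟩, h, subset_rfl⟩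
        · exact fun s => (hcC s.2).2.1
        · exact fun s => (hcC s.2).2.2.1.isCompact
        · exact fun s => (hcC s.2).2.2.1
      rwa [Set.sInter_eq_iInter]
    · exact isClosed_sInter (fun s hs => (hcC hs).2.2.1)
    · intro w hw
      rw [Set.mem_sInter] at hw ⊢
      intro s hs
      exact (hcC hs).2.2.2 (hw s hs)
  obtain ⟨M, hMsub, hMC, hMmin⟩ := zorn_superset_nonempty C
    (fun c hcC hch _ => hchain c hcC hch) _ hαC
  -- M is infinite since it contains no periodic points
  have hMinf : M.Infinite := by
    by_contra hfin
    rw [Set.not_infinite] at hfin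
    obtain ⟨p, hpM⟩ := hMC.2.1
    have horb : Set.MapsTo (fun n : ℕ => T^[n] p) Set.univ M :=
      fun n _ => (hMC.2.2.2.iterate n) hpM
    obtain ⟨a, -, b, -, hab, heq⟩ :=
      Set.infinite_univ.exists_ne_map_eq_of_mapsTo horb hfin
    have key : ∀ a b : ℕ, a < b → T^[a] p = T^[b] p → False := by
      intro a b hlt heq'
      have hq : T^[a] p ∈ M := (hMC.2.2.2.iterate a) hpM
      apply hnoper _ (hMC.1 hq) (b - a) (by omega)
      rw [← Function.iterate_add_apply, show b - a + a = b by omega, ← heq']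
    rcases Nat.lt_or_ge a b with h | h
    · exact key a b h heq
    · exact key b a (by omega) heq.symm
  refine ⟨M, hMC.1, hMC.2.1, hMC.2.2.1, hMC.2.2.2, hMinf, ?_⟩
  intro M' hsub hne hcl hmaps
  exact hsub.antisymm (hMmin ⟨hsub.trans hMC.1, hne, hcl, hmaps⟩ hsub)
end

section
/- Let (X,T) be a locally radially shrinking system and let p ∈ X be a periodic point of T. Then there exists an open set U containing p such that for every x ∈ U the ω-limit set ω_T(x) equals the (finite) orbit Orb(p) = {p, T(p), …, T^{k−1}(p)} of p, where k is the period of p. -/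
/-- The ω-limit set of `x` under `T`: the set of limit points of the forward orbit,
`ω_T(x) = ⋂ₙ closure {Tⁱ(x) : i ≥ n}`. -/
def omegaLimitSet {X : Type*} [MetricSpace X] (T : X → X) (x : X) : Set X :=
  ⋂ n : ℕ, closure {y : X | ∃ i : ℕ, n ≤ i ∧ T^[i] x = y}

set_option maxHeartbeats 1000000 in
/-- Let `(X, T)` be an l.r.s. system and `p` a periodic point with (least) period `k`.
Then there is an open set `U ∋ p` such that `ω_T(x) = Orb(p) = {p, T p, …, T^[k-1] p}`
for every `x ∈ U`. -/
theorem lrs_periodic_point_attracts_neighborhood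
    {X : Type*} [MetricSpace X] [CompactSpace X] [Nonempty X]
    (T : X → X) (hT : Continuous T) (hsurj : Function.Surjective T)
    (hlrs : IsLocallyRadiallyShrinking T)
    (p : X) (k : ℕ) (hk : 0 < k) (hper : T^[k] p = p)
    (hleast : ∀ m : ℕ, 0 < m → m < k → T^[m] p ≠ p) :
    ∃ U : Set X, IsOpen U ∧ p ∈ U ∧
      ∀ x ∈ U, omegaLimitSet T x = {y : X | ∃ i : ℕ, i < k ∧ T^[i] p = y} := by
  classical
  choose εf hεf hshrink using hlrs
  -- the periodic point as IsPeriodicPt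
  have hperiodic : Function.IsPeriodicPt T k p := hper
  have hiter_mod : ∀ n : ℕ, T^[n] p = T^[n % k] p := fun n =>
    (hperiodic.iterate_mod_apply n).symm
  have hne : (Finset.range k).Nonempty := ⟨0, Finset.mem_range.mpr hk⟩
  set ε : ℝ := (Finset.range k).inf' hne (fun j => εf (T^[j] p)) with hεdef
  have hε : 0 < ε := by
    rw [hεdef, Finset.lt_inf'_iff]
    intro j _
    exact hεf _
  have hεle : ∀ n : ℕ, ε ≤ εf (T^[n] p) := by
    intro n
    rw [hiter_mod n]
    exact Finset.inf'_le _ (Finset.mem_range.mpr (Nat.mod_lt n hk))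
  -- one-step shrinking near an orbit point
  have step : ∀ (a : X) (n : ℕ), dist a (T^[n] p) < ε →
      dist (T a) (T^[n + 1] p) ≤ dist a (T^[n] p) := by
    intro a n h
    rcases eq_or_ne a (T^[n] p) with rfl | hne'
    · simp [Function.iterate_succ_apply']
    · have := hshrink (T^[n] p) a hne'
        (by rw [dist_comm]; exact lt_of_lt_of_le h (hεle n))
      rw [Function.iterate_succ_apply', dist_comm (T a), dist_comm a]
      exact le_of_lt this
  -- iterated shrinking
  have iterB : ∀ (a : X) (m : ℕ), dist a (T^[m] p) < ε →
      ∀ n : ℕ, dist (T^[n] a) (T^[n + m] p) ≤ dist a (T^[m] p) := by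
    intro a m h n
    induction n with
    | zero => simp
    | succ n ih =>
      have h1 : dist (T^[n] a) (T^[n + m] p) < ε := lt_of_le_of_lt ih h
      calc dist (T^[n + 1] a) (T^[n + 1 + m] p)
          = dist (T (T^[n] a)) (T^[n + m + 1] p) := by
            rw [Function.iterate_succ_apply']
            congr 2
            omega
        _ ≤ dist (T^[n] a) (T^[n + m] p) := step _ _ h1
        _ ≤ dist a (T^[m] p) := ih
  -- main convergence claim
  have key : ∀ x : X, dist x p < ε →
      Filter.Tendsto (fun n => dist (T^[n] x) (T^[n] p)) Filter.atTop (nhds 0) := by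
    intro x hx
    set d : ℕ → ℝ := fun n => dist (T^[n] x) (T^[n] p) with hd
    have hd0 : d 0 = dist x p := by simp [hd]
    have hdle : ∀ n, d n ≤ dist x p := by
      intro n
      have := iterB x 0 (by simpa using hx) n
      simpa using this
    have hdlt : ∀ n, d n < ε := fun n => lt_of_le_of_lt (hdle n) hx
    have hanti : Antitone d := by
      apply antitone_nat_of_succ_le
      intro n
      have := step (T^[n] x) n (hdlt n)
      simpa [hd, Function.iterate_succ_apply'] using this
    have hbdd : BddBelow (Set.range d) := ⟨0, by rintro _ ⟨n, rfl⟩; exact dist_nonneg⟩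
    set r : ℝ := ⨅ n, d n with hr
    have htend : Filter.Tendsto d Filter.atTop (nhds r) :=
      tendsto_atTop_ciInf hanti hbdd
    have hrnn : 0 ≤ r := le_ciInf fun n => dist_nonneg
    have hrd0 : r ≤ d 0 := ciInf_le hbdd 0
    -- show r = 0
    have hr0 : r = 0 := by
      by_contra hr0
      have hrpos : 0 < r := lt_of_le_of_ne hrnn (Ne.symm hr0)
      -- subsequence of T^[n*k] x converging
      obtain ⟨z, -, φ, hφ, hconv⟩ :=
        IsCompact.tendsto_subseq (x := fun n => T^[n * k] x) isCompact_univ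
          (fun n => Set.mem_univ _)
      have hperk : ∀ m : ℕ, T^[m * k] p = p := fun m => (hperiodic.const_mul m)
      have hidx : Filter.Tendsto (fun n => φ n * k) Filter.atTop Filter.atTop := by
        apply Filter.Tendsto.atTop_mul_const' hk
        exact hφ.tendsto_atTop
      -- dist z p = r
      have hdz : Filter.Tendsto (fun n => dist (T^[φ n * k] x) p) Filter.atTop
          (nhds (dist z p)) := (Continuous.dist continuous_id continuous_const).continuousAt.tendsto.comp hconv
      have hdz' : Filter.Tendsto (fun n => dist (T^[φ n * k] x) p) Filter.atTop (nhds r) := by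
        have : (fun n => dist (T^[φ n * k] x) p) = fun n => d (φ n * k) := by
          funext n; simp [hd, hperk]
        rw [this]
        exact htend.comp hidx
      have hzp : dist z p = r := tendsto_nhds_unique hdz hdz'
      -- dist (T^[k] z) p = r
      have hTkz : Filter.Tendsto (fun n => T^[φ n * k + k] x) Filter.atTop (nhds (T^[k] z)) := by
        have : (fun n => T^[φ n * k + k] x) = (fun w => T^[k] w) ∘ (fun n => T^[φ n * k] x) := by
          funext n
          simp [Function.comp, ← Function.iterate_add_apply, Nat.add_comm]
        rw [this]
        exact ((hT.iterate k).continuousAt.tendsto).comp hconv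
      have hdz2 : Filter.Tendsto (fun n => dist (T^[φ n * k + k] x) p) Filter.atTop
          (nhds (dist (T^[k] z) p)) :=
        (Continuous.dist continuous_id continuous_const).continuousAt.tendsto.comp hTkz
      have hdz2' : Filter.Tendsto (fun n => dist (T^[φ n * k + k] x) p) Filter.atTop (nhds r) := by
        have heq : (fun n => dist (T^[φ n * k + k] x) p) = fun n => d (φ n * k + k) := by
          funext n
          have : T^[φ n * k + k] p = p := by
            have := hperk (φ n + 1)
            rwa [Nat.add_mul, Nat.one_mul] at this
          simp [hd, this]
        rw [heq]
        exact htend.comp (Filter.tendsto_atTop_mono (fun n => Nat.le_add_right _ _) hidx)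
      have hTkzp : dist (T^[k] z) p = r := tendsto_nhds_unique hdz2 hdz2'
      -- but one application of T strictly shrinks
      have hzne : z ≠ p := by
        intro h
        rw [h, dist_self] at hzp
        exact hr0 hzp.symm
      have hzlt : dist z p < ε := by
        rw [hzp]
        exact lt_of_le_of_lt hrd0 (by rw [hd0]; exact hx)
      have hsh : dist (T p) (T z) < dist p z := by
        apply hshrink p z hzne
        rw [dist_comm]
        calc dist z p < ε := hzlt
          _ ≤ εf (T^[0] p) := hεle 0
          _ = εf p := by simp
      have h1 : dist (T z) (T^[1] p) < r := by
        rw [dist_comm] at hsh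
        rw [dist_comm p z, hzp] at hsh
        simpa using hsh
      have h2 : dist (T^[k - 1] (T z)) (T^[(k - 1) + 1] p) ≤ dist (T z) (T^[1] p) :=
        iterB (T z) 1 (lt_trans h1 (lt_of_le_of_lt hrd0 (by rw [hd0]; exact hx))) (k - 1)
      have h3 : T^[k - 1] (T z) = T^[k] z := by
        rw [← Function.iterate_succ_apply]
        congr 1
        omega
      have h4 : T^[(k - 1) + 1] p = p := by
        have : (k - 1) + 1 = k := by omega
        rw [this, hper]
      rw [h3, h4] at h2
      rw [hTkzp] at h2
      exact absurd (lt_of_le_of_lt h2 h1) (lt_irrefl r)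
    rw [hr0] at htend
    exact htend
  -- the orbit set
  set O : Set X := {y : X | ∃ i : ℕ, i < k ∧ T^[i] p = y} with hO
  have hOfin : O.Finite := by
    have : O = (fun i => T^[i] p) '' (Set.Iio k) := by
      ext y
      simp [hO, Set.mem_image]
    rw [this]
    exact (Set.finite_Iio k).image _
  have hOclosed : IsClosed O := hOfin.isClosed
  have hOne : O.Nonempty := ⟨p, 0, hk, rfl⟩
  have hOmem : ∀ i : ℕ, T^[i] p ∈ O := by
    intro i
    exact ⟨i % k, Nat.mod_lt i hk, (hiter_mod i).symm⟩
  refine ⟨Metric.ball p ε, Metric.isOpen_ball, Metric.mem_ball_self hε, ?_⟩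
  intro x hx
  rw [Metric.mem_ball] at hx
  have hxd := key x hx
  apply Set.eq_of_subset_of_subset
  · -- ω(x) ⊆ O
    intro y hy
    rw [omegaLimitSet, Set.mem_iInter] at hy
    rw [← IsClosed.closure_eq hOclosed]
    rw [Metric.mem_closure_iff]
    intro δ hδ
    obtain ⟨N, hN⟩ := (Metric.tendsto_atTop.mp hxd) (δ / 2) (by linarith)
    have hyN := hy N
    rw [Metric.mem_closure_iff] at hyN
    obtain ⟨b, ⟨i, hiN, rfl⟩, hb⟩ := hyN (δ / 2) (by linarith)
    refine ⟨T^[i] p, hOmem i, ?_⟩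
    have : dist (T^[i] x) (T^[i] p) < δ / 2 := by
      have := hN i hiN
      rwa [Real.dist_eq, sub_zero, abs_of_nonneg dist_nonneg] at this
    calc dist y (T^[i] p) ≤ dist y (T^[i] x) + dist (T^[i] x) (T^[i] p) := dist_triangle _ _ _
      _ < δ / 2 + δ / 2 := add_lt_add hb this
      _ = δ := by ring
  · -- O ⊆ ω(x)
    rintro y ⟨j, hj, rfl⟩
    rw [omegaLimitSet, Set.mem_iInter]
    intro n
    refine mem_closure_of_tendsto (f := fun m : ℕ => T^[(n + m) * k + j] x)
      (b := Filter.atTop) ?_ ?_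
    · rw [tendsto_iff_dist_tendsto_zero]
      have heq : (fun m : ℕ => dist (T^[(n + m) * k + j] x) (T^[j] p)) =
          fun m : ℕ => dist (T^[(n + m) * k + j] x) (T^[(n + m) * k + j] p) := by
        funext m
        congr 1
        rw [Nat.add_comm, Function.iterate_add_apply]
        congr 1
        exact (hperiodic.const_mul (n + m)).symm
      rw [heq]
      apply hxd.comp
      apply Filter.tendsto_atTop_mono (f := fun m : ℕ => m)
      · intro m
        have := Nat.le_mul_of_pos_right (n + m) hk
        omega
      · exact Filter.tendsto_id
    · filter_upwards with m
      refine ⟨(n + m) * k + j, ?_, rfl⟩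
      have : n ≤ (n + m) * k :=
        le_trans (Nat.le_mul_of_pos_right n hk)
          (Nat.mul_le_mul_right k (Nat.le_add_right n m))
      omega
end

section
/- If a locally radially shrinking system (X,T) is topologically transitive and has a periodic point p, then X = Orb(p); that is, X is finite and equals the periodic orbit of p. -/
open Filter

/-- Near a periodic point, a locally radially shrinking map attracts: iterates along
multiples of the period converge to the periodic point. -/
private lemma lrs_key {X : Type*} [MetricSpace X] [CompactSpace X]
    (T : X → X) (hT : Continuous T)
    (hlrs : IsLocallyRadiallyShrinking T)
    (p : X) (k : ℕ) (hk : 1 ≤ k) (hper : T^[k] p = p) :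
    ∃ δ > 0, ∀ x : X, dist x p < δ →
      Tendsto (fun m : ℕ => T^[m * k] x) atTop (nhds p) := by
  choose ε hεpos hεsh using hlrs
  have hkpos : 0 < k := hk
  have hmul : ∀ q : ℕ, T^[k * q] p = p := by
    intro q
    induction q with
    | zero => simp
    | succ q ih =>
      rw [Nat.mul_succ, Function.iterate_add_apply, hper, ih]
  have hmod : ∀ m : ℕ, T^[m] p = T^[m % k] p := by
    intro m
    conv_lhs => rw [← Nat.mod_add_div m k]
    rw [Function.iterate_add_apply, hmul]
  set s : Finset ℝ := (Finset.range k).image (fun r => ε (T^[r] p)) with hs_def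
  have hs : s.Nonempty := by
    refine ⟨ε (T^[0] p), ?_⟩
    simp only [hs_def, Finset.mem_image]
    exact ⟨0, Finset.mem_range.2 hkpos, rfl⟩
  set δ : ℝ := s.min' hs with hδ_def
  have hδpos : 0 < δ := by
    have hmem := s.min'_mem hs
    simp only [hs_def, Finset.mem_image] at hmem
    obtain ⟨r, -, hr⟩ := hmem
    rw [hδ_def, ← hr]
    exact hεpos _
  have hδle : ∀ j : ℕ, δ ≤ ε (T^[j] p) := by
    intro j
    rw [hmod j]
    apply Finset.min'_le
    simp only [hs_def, Finset.mem_image]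
    exact ⟨j % k, Finset.mem_range.2 (Nat.mod_lt _ hkpos), rfl⟩
  refine ⟨δ, hδpos, ?_⟩
  -- one-step non-expansion near the periodic orbit
  have step : ∀ (j : ℕ) (y : X), dist y (T^[j] p) < δ →
      dist (T y) (T^[j + 1] p) ≤ dist y (T^[j] p) := by
    intro j y h
    rcases eq_or_ne y (T^[j] p) with rfl | hne
    · simp [Function.iterate_succ_apply']
    · have h2 := hεsh (T^[j] p) y hne
        (by rw [dist_comm]; exact lt_of_lt_of_le h (hδle j))
      rw [Function.iterate_succ_apply']
      rw [dist_comm (T y) (T (T^[j] p)), dist_comm y (T^[j] p)]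
      exact le_of_lt h2
  have chain : ∀ (j0 : ℕ) (y : X), dist y (T^[j0] p) < δ →
      ∀ j, dist (T^[j] y) (T^[j0 + j] p) ≤ dist y (T^[j0] p) := by
    intro j0 y h j
    induction j with
    | zero => simp
    | succ j ih =>
      have h2 : dist (T^[j] y) (T^[j0 + j] p) < δ := lt_of_le_of_lt ih h
      have h3 := step (j0 + j) (T^[j] y) h2
      have e1 : T^[j + 1] y = T (T^[j] y) := Function.iterate_succ_apply' T j y
      have e2 : j0 + (j + 1) = (j0 + j) + 1 := by omega
      rw [e1, e2]
      exact le_trans h3 ih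
  -- strict decrease over one full period, away from p
  have strictk : ∀ y : X, dist y p < δ → y ≠ p → dist (T^[k] y) p < dist y p := by
    intro y h hne
    have hδ0 : δ ≤ ε p := by simpa using hδle 0
    have h1 : dist (T y) (T p) < dist y p := by
      have h2 := hεsh p y hne (by rw [dist_comm]; exact lt_of_lt_of_le h hδ0)
      rw [dist_comm p y] at h2
      rwa [dist_comm (T p) (T y)] at h2
    have h1' : dist (T y) (T^[1] p) < dist y p := by simpa using h1
    have h2 := chain 1 (T y) (lt_trans h1' h) (k - 1)
    have e1 : 1 + (k - 1) = k := by omega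
    have e2 : T^[k] y = T^[k - 1] (T y) := by
      conv_lhs => rw [show k = (k - 1) + 1 by omega]
      exact Function.iterate_succ_apply T (k - 1) y
    rw [e1, hper] at h2
    rw [e2]
    exact lt_of_le_of_lt h2 h1'
  -- non-strict decrease over one full period
  have nonexp : ∀ y : X, dist y p < δ → dist (T^[k] y) p ≤ dist y p := by
    intro y h
    have h2 := chain 0 y (by simpa using h) k
    simpa [hper] using h2
  intro x hx
  set a : ℕ → ℝ := fun m => dist (T^[m * k] x) p with ha_def
  have hiter : ∀ m : ℕ, T^[(m + 1) * k] x = T^[k] (T^[m * k] x) := by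
    intro m
    rw [show (m + 1) * k = k + m * k by ring, Function.iterate_add_apply]
  have hltδ : ∀ m, a m < δ := by
    intro m
    induction m with
    | zero => simpa [ha_def] using hx
    | succ m ih =>
      have := nonexp (T^[m * k] x) ih
      have e : a (m + 1) = dist (T^[k] (T^[m * k] x)) p := by
        simp only [ha_def]; rw [hiter m]
      rw [e]
      exact lt_of_le_of_lt this ih
  have hanti : Antitone a := by
    apply antitone_nat_of_succ_le
    intro m
    have e : a (m + 1) = dist (T^[k] (T^[m * k] x)) p := by
      simp only [ha_def]; rw [hiter m]
    rw [e]
    exact nonexp _ (hltδ m)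
  have hbdd : BddBelow (Set.range a) := ⟨0, by rintro _ ⟨m, rfl⟩; exact dist_nonneg⟩
  have htendsA : Tendsto a atTop (nhds (⨅ m, a m)) := tendsto_atTop_ciInf hanti hbdd
  set A : ℝ := ⨅ m, a m with hA_def
  have hA0 : 0 ≤ A := le_ciInf fun m => dist_nonneg
  have hAδ : A < δ := lt_of_le_of_lt (ciInf_le hbdd 0) (hltδ 0)
  have hAzero : A = 0 := by
    by_contra hA
    have hApos : 0 < A := lt_of_le_of_ne hA0 (Ne.symm hA)
    obtain ⟨w, -, φ, hφ, hw⟩ :=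
      isCompact_univ.tendsto_subseq (x := fun m => T^[m * k] x) (fun m => Set.mem_univ _)
    have hwd : Tendsto (fun i => a (φ i)) atTop (nhds (dist w p)) :=
      hw.dist tendsto_const_nhds
    have hwd' : Tendsto (fun i => a (φ i)) atTop (nhds A) :=
      htendsA.comp hφ.tendsto_atTop
    have hwp : dist w p = A := tendsto_nhds_unique hwd hwd'
    have hwne : w ≠ p := by
      intro h
      rw [h, dist_self] at hwp
      exact hA hwp.symm
    have hwlt : dist w p < δ := by rw [hwp]; exact hAδ
    have hstrict : dist (T^[k] w) p < A := by
      have := strictk w hwlt hwne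
      rwa [hwp] at this
    have hφ1 : Tendsto (fun i => φ i + 1) atTop atTop :=
      tendsto_atTop_mono (fun i => le_trans (hφ.id_le i) (Nat.le_succ _)) tendsto_id
    have h1 : Tendsto (fun i => a (φ i + 1)) atTop (nhds A) := htendsA.comp hφ1
    have h2 : Tendsto (fun i => T^[k] (T^[φ i * k] x)) atTop (nhds (T^[k] w)) :=
      ((hT.iterate k).tendsto w).comp hw
    have h3 : Tendsto (fun i => a (φ i + 1)) atTop (nhds (dist (T^[k] w) p)) := by
      have h5 := h2.dist (tendsto_const_nhds : Tendsto (fun _ : ℕ => p) atTop (nhds p))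
      convert h5 using 2 with i
      simp only [ha_def]
      rw [hiter (φ i)]
    have : dist (T^[k] w) p = A := tendsto_nhds_unique h3 h1
    rw [this] at hstrict
    exact lt_irrefl _ hstrict
  rw [hAzero] at htendsA
  exact tendsto_iff_dist_tendsto_zero.2 htendsA

/-- If an l.r.s. system `(X, T)` is topologically transitive (some forward orbit is
dense) and has a periodic point `p`, then `X = Orb(p)`: `X` is finite and every point
of `X` lies on the periodic orbit of `p`. -/
theorem lrs_transitive_with_periodic_point_is_periodic_orbit
    {X : Type*} [MetricSpace X] [CompactSpace X] [Nonempty X]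
    (T : X → X) (hT : Continuous T) (hsurj : Function.Surjective T)
    (hlrs : IsLocallyRadiallyShrinking T)
    (htrans : ∃ z : X, Dense (Set.range fun n : ℕ => T^[n] z))
    (p : X) (k : ℕ) (hk : 1 ≤ k) (hper : T^[k] p = p) :
    Finite X ∧ Set.univ = Set.range fun i : ℕ => T^[i] p := by
  obtain ⟨z, hz⟩ := htrans
  have hkpos : 0 < k := hk
  have hmul : ∀ q : ℕ, T^[k * q] p = p := by
    intro q
    induction q with
    | zero => simp
    | succ q ih => rw [Nat.mul_succ, Function.iterate_add_apply, hper, ih]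
  have hmod : ∀ m : ℕ, T^[m] p = T^[m % k] p := by
    intro m
    conv_lhs => rw [← Nat.mod_add_div m k]
    rw [Function.iterate_add_apply, hmul]
  by_cases hcase : ∃ a b : ℕ, a < b ∧ T^[a] z = T^[b] z
  · -- The dense orbit is eventually periodic, hence `X` is finite.
    obtain ⟨a, b, hab, heq⟩ := hcase
    -- every orbit point appears with index < b
    have horb : ∀ n : ℕ, ∃ m : ℕ, m < b ∧ T^[n] z = T^[m] z := by
      intro n
      induction n using Nat.strong_induction_on with
      | _ n ih =>
        by_cases hn : n < b
        · exact ⟨n, hn, rfl⟩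
        · push_neg at hn
          have h1 : T^[n] z = T^[n - b + a] z := by
            have e1 : n = (n - b) + b := by omega
            have e2 : T^[n] z = T^[n - b] (T^[b] z) := by
              conv_lhs => rw [e1]
              exact Function.iterate_add_apply T (n - b) b z
            rw [e2, ← heq, ← Function.iterate_add_apply]
          have h2 : n - b + a < n := by omega
          obtain ⟨m, hm, hme⟩ := ih (n - b + a) h2
          exact ⟨m, hm, h1.trans hme⟩
    have hfin : (Set.range fun n : ℕ => T^[n] z).Finite := by
      apply Set.Finite.subset ((Set.finite_Iio b).image fun m => T^[m] z)
      rintro _ ⟨n, rfl⟩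
      obtain ⟨m, hm, hme⟩ := horb n
      exact ⟨m, hm, hme.symm⟩
    have huniv : Set.univ = Set.range fun n : ℕ => T^[n] z := by
      have := hz.closure_eq
      rw [hfin.isClosed.closure_eq] at this
      exact this.symm
    have hXfin : Finite X := by
      rw [← Set.finite_univ_iff]
      rw [huniv]
      exact hfin
    have hinj : Function.Injective T := (Finite.injective_iff_surjective).2 hsurj
    have hinjIt : ∀ n : ℕ, Function.Injective (T^[n]) := fun n => hinj.iterate n
    -- z is genuinely periodic with period m := b - a
    set m : ℕ := b - a with hm_def
    have hmpos : 0 < m := by omega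
    have hzper : T^[m] z = z := by
      apply hinjIt a
      have e : a + m = b := by omega
      rw [← Function.iterate_add_apply, e, ← heq]
    have hzmul : ∀ q : ℕ, T^[m * q] z = z := by
      intro q
      induction q with
      | zero => simp
      | succ q ih => rw [Nat.mul_succ, Function.iterate_add_apply, hzper, ih]
    -- p is on the orbit of z
    have hp : ∃ i : ℕ, p = T^[i] z := by
      have : p ∈ Set.univ := Set.mem_univ p
      rw [huniv] at this
      obtain ⟨i, hi⟩ := this
      exact ⟨i, hi.symm⟩
    obtain ⟨i, hpi⟩ := hp
    -- z is on the orbit of p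
    have hzp : ∃ j : ℕ, z = T^[j] p := by
      refine ⟨m * (i + 1) - i, ?_⟩
      have hle : i ≤ m * (i + 1) := by
        calc i ≤ m * i := Nat.le_mul_of_pos_left i hmpos
        _ ≤ m * (i + 1) := Nat.mul_le_mul_left m (Nat.le_succ i)
      rw [hpi, ← Function.iterate_add_apply]
      have e : m * (i + 1) - i + i = m * (i + 1) := by omega
      rw [e, hzmul (i + 1)]
    obtain ⟨j, hzj⟩ := hzp
    refine ⟨hXfin, ?_⟩
    apply le_antisymm
    · intro x _
      have hx : x ∈ Set.range fun n : ℕ => T^[n] z := by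
        rw [← huniv]; exact Set.mem_univ x
      obtain ⟨n, hn⟩ := hx
      refine ⟨n + j, ?_⟩
      show T^[n + j] p = x
      rw [Function.iterate_add_apply, ← hzj]
      exact hn
    · intro x _
      exact Set.mem_univ x
  · -- The orbit map of z is injective: derive a contradiction.
    exfalso
    push_neg at hcase
    have hinj : ∀ a b : ℕ, a < b → T^[a] z ≠ T^[b] z := hcase
    obtain ⟨δ, hδpos, hkey⟩ := lrs_key T hT hlrs p k hk hper
    -- find an orbit point close to p
    have hdr : DenseRange fun n : ℕ => T^[n] z := hz
    obtain ⟨n, hn⟩ := hdr.exists_dist_lt p hδpos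
    set x : X := T^[n] z with hx_def
    have hxp : dist x p < δ := by rw [dist_comm]; exact hn
    have htd : Tendsto (fun m : ℕ => T^[m * k] x) atTop (nhds p) := hkey x hxp
    -- z is on the periodic orbit of p
    have hzF : ∃ r : ℕ, r < k ∧ z = T^[r] p := by
      by_contra hzF
      push_neg at hzF
      -- positive distance from z to the periodic orbit
      set c0s : Finset ℝ := (Finset.range k).image (fun r => dist z (T^[r] p)) with hc0s_def
      have hc0s : c0s.Nonempty := by
        refine ⟨dist z (T^[0] p), ?_⟩
        simp only [hc0s_def, Finset.mem_image]
        exact ⟨0, Finset.mem_range.2 hkpos, rfl⟩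
      set c0 : ℝ := c0s.min' hc0s with hc0_def
      have hc0pos : 0 < c0 := by
        have hmem := c0s.min'_mem hc0s
        simp only [hc0s_def, Finset.mem_image] at hmem
        obtain ⟨r, hr, hre⟩ := hmem
        rw [hc0_def, ← hre]
        rw [dist_pos]
        exact hzF r (Finset.mem_range.1 hr)
      have hc0le : ∀ r : ℕ, r < k → c0 ≤ dist z (T^[r] p) := by
        intro r hr
        apply Finset.min'_le
        simp only [hc0s_def, Finset.mem_image]
        exact ⟨r, Finset.mem_range.2 hr, rfl⟩
      -- eventually all iterates at times ≥ N are within c0/2 of the periodic orbit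
      have hev : ∀ r : ℕ, r < k → ∀ᶠ m : ℕ in atTop,
          dist (T^[r] (T^[m * k] x)) (T^[r] p) < c0 / 2 := by
        intro r _
        have h1 : Tendsto (fun m : ℕ => T^[r] (T^[m * k] x)) atTop (nhds (T^[r] p)) :=
          ((hT.iterate r).tendsto p).comp htd
        have h2 := Metric.tendsto_atTop.1 h1 (c0 / 2) (by linarith)
        exact Filter.eventually_atTop.2 h2
      have hev' : ∀ᶠ m : ℕ in atTop, ∀ r ∈ Finset.range k,
          dist (T^[r] (T^[m * k] x)) (T^[r] p) < c0 / 2 := by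
        rw [Filter.eventually_all_finset]
        intro r hr
        exact hev r (Finset.mem_range.1 hr)
      obtain ⟨M, hM⟩ := Filter.eventually_atTop.1 hev'
      set N : ℕ := n + M * k with hN_def
      set S : Set X := Set.range fun s : ℕ => T^[N + s] z with hS_def
      -- the tail S lies in the union of small closed balls around the periodic orbit
      have hSsub : S ⊆ ⋃ r ∈ Finset.range k, Metric.closedBall (T^[r] p) (c0 / 2) := by
        rintro _ ⟨s, rfl⟩
        simp only [Set.mem_iUnion, Metric.mem_closedBall]
        refine ⟨s % k, Finset.mem_range.2 (Nat.mod_lt _ hkpos), ?_⟩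
        have e : T^[N + s] z = T^[s % k] (T^[(M + s / k) * k] x) := by
          rw [hx_def, ← Function.iterate_add_apply, ← Function.iterate_add_apply]
          congr 1
          have := Nat.mod_add_div s k
          rw [hN_def]
          ring_nf
          omega
        rw [e]
        exact le_of_lt (hM (M + s / k) (Nat.le_add_right M _) (s % k)
          (Finset.mem_range.2 (Nat.mod_lt _ hkpos)))
      -- z belongs to the closure of the tail S
      have hzS : z ∈ closure S := by
        obtain ⟨w, hw⟩ := hsurj z
        have hwin : w ∈ Set.univ := Set.mem_univ w
        have hwcl : w ∈ closure (Set.range fun n' : ℕ => T^[n'] z) := by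
          rw [hz.closure_eq]; exact hwin
        have hsplit : (Set.range fun n' : ℕ => T^[n'] z) ⊆
            ((fun n' : ℕ => T^[n'] z) '' Set.Iio (N + 1)) ∪ S := by
          rintro _ ⟨n', rfl⟩
          by_cases hn' : n' < N + 1
          · exact Or.inl ⟨n', hn', rfl⟩
          · refine Or.inr ⟨n' - N, ?_⟩
            show T^[N + (n' - N)] z = T^[n'] z
            have e : N + (n' - N) = n' := by omega
            rw [e]
        have hfin' : ((fun n' : ℕ => T^[n'] z) '' Set.Iio (N + 1)).Finite :=
          (Set.finite_Iio (N + 1)).image _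
        have hwcl2 : w ∈ ((fun n' : ℕ => T^[n'] z) '' Set.Iio (N + 1)) ∪ closure S := by
          have h1 : closure (Set.range fun n' : ℕ => T^[n'] z) ⊆
              closure (((fun n' : ℕ => T^[n'] z) '' Set.Iio (N + 1)) ∪ S) :=
            closure_mono hsplit
          have h2 := h1 hwcl
          rw [closure_union, hfin'.isClosed.closure_eq] at h2
          exact h2
        rcases hwcl2 with hwfin | hwS
        · obtain ⟨j, -, hj⟩ := hwfin
          exfalso
          apply hinj 0 (j + 1) (Nat.succ_pos j)
          simp only [Function.iterate_zero_apply]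
          rw [Function.iterate_succ_apply', show T^[j] z = w from hj, hw]
        · have : z ∈ T '' closure S := ⟨w, hwS, hw⟩
          have h3 : T '' closure S ⊆ closure (T '' S) := image_closure_subset_closure_image hT
          have h4 : T '' S ⊆ S := by
            rintro _ ⟨_, ⟨s, rfl⟩, rfl⟩
            refine ⟨s + 1, ?_⟩
            show T^[N + (s + 1)] z = T (T^[N + s] z)
            rw [show N + (s + 1) = (N + s) + 1 by omega, Function.iterate_succ_apply']
          exact closure_mono h4 (h3 this)
      -- contradiction: z is both far from and close to the periodic orbit
      have hclosed : IsClosed (⋃ r ∈ Finset.range k, Metric.closedBall (T^[r] p) (c0 / 2)) := by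
        apply Set.Finite.isClosed_biUnion (Finset.finite_toSet _)
        intro r _
        exact Metric.isClosed_closedBall
      have hzin := (closure_minimal hSsub hclosed) hzS
      simp only [Set.mem_iUnion, Metric.mem_closedBall] at hzin
      obtain ⟨r, hr, hrd⟩ := hzin
      have := hc0le r (Finset.mem_range.1 hr)
      linarith
    -- but then z is periodic, contradicting injectivity of the orbit map
    obtain ⟨r, -, hzr⟩ := hzF
    apply hinj 0 k hkpos
    simp only [Function.iterate_zero_apply]
    rw [hzr, ← Function.iterate_add_apply, Nat.add_comm, Function.iterate_add_apply, hper]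
end

section
/- Let (X,T) be a locally radially shrinking system, let q ∈ X be a fixed point of T, and let x ∈ X with x ≠ q. Then there exists an open set V containing q such that x ∉ V and T(V) ⊆ V. -/
/-- Let `(X, T)` be an l.r.s. system, `q` a fixed point of `T`, and `x ≠ q`.  Then
there is an open set `V ∋ q` with `x ∉ V` and `T(V) ⊆ V`. -/
theorem lrs_fixed_point_has_invariant_neighborhood
    {X : Type*} [MetricSpace X] [CompactSpace X] [Nonempty X]
    (T : X → X) (hT : Continuous T) (hsurj : Function.Surjective T)
    (hlrs : IsLocallyRadiallyShrinking T)
    (q : X) (hq : T q = q) (x : X) (hx : x ≠ q) :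
    ∃ V : Set X, IsOpen V ∧ q ∈ V ∧ x ∉ V ∧ Set.MapsTo T V V := by
  obtain ⟨ε, hε, hshr⟩ := hlrs q
  have hdx : 0 < dist q x := dist_pos.mpr (Ne.symm hx)
  set r := min ε (dist q x) with hr
  have hrpos : 0 < r := lt_min hε hdx
  refine ⟨Metric.ball q r, Metric.isOpen_ball, Metric.mem_ball_self hrpos, ?_, ?_⟩
  · intro hxm
    rw [Metric.mem_ball, dist_comm] at hxm
    exact absurd (min_le_right ε (dist q x)) (not_le.mpr hxm)
  · intro y hy
    rcases eq_or_ne y q with rfl | hyq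
    · simpa [hq] using hy
    · rw [Metric.mem_ball, dist_comm] at hy ⊢
      have h1 : dist q y < ε := lt_of_lt_of_le hy (min_le_left _ _)
      have := hshr y hyq h1
      rw [hq] at this
      exact this.trans hy
end

section
/- Every minimal Cantor system (C,T) is topologically conjugate to a locally radially shrinking system on a compact subset of ℝ: there exist a compact set X ⊆ ℝ, a continuous surjection f : X → X satisfying the locally radially shrinking condition, and a homeomorphism π : C → X with π ∘ T = f ∘ π. -/
open Set Topology Filter

set_option linter.unusedSectionVars false
namespace Slow

variable {C : Type*} [MetricSpace C] [CompactSpace C] [Nonempty C] [TotallyDisconnectedSpace C]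

lemma isOpen_fiber_of_locally {β : Type*} (f : C → β)
    (h : ∀ y : C, ∃ O : Set C, IsOpen O ∧ y ∈ O ∧ ∀ z ∈ O, f z = f y) (x : C) :
    IsOpen {y | f y = f x} := by
  rw [isOpen_iff_forall_mem_open]
  intro y hy
  obtain ⟨O, hO, hyO, hOf⟩ := h y
  exact ⟨O, fun z hz => (hOf z hz).trans hy, hO, hyO⟩

lemma finite_range_of_open_fibers {β : Type*} (f : C → β)
    (h : ∀ x : C, IsOpen {y | f y = f x}) : (range f).Finite := by
  obtain ⟨t, ht⟩ := (isCompact_univ (X := C)).elim_finite_subcover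
    (fun x : C => {y | f y = f x}) h (fun x _ => mem_iUnion.2 ⟨x, rfl⟩)
  refine Set.Finite.subset (t.finite_toSet.image f) ?_
  rintro _ ⟨x, rfl⟩
  obtain ⟨i, hi, hx⟩ := by simpa using ht (mem_univ x)
  exact ⟨i, hi, (hx : f x = f i).symm⟩

lemma exists_ne_in_open (hperf : Perfect (univ : Set C)) {V : Set C} (hV : IsOpen V)
    {x : C} (hx : x ∈ V) : ∃ y ∈ V, y ≠ x := by
  have h := hperf.acc x (mem_univ x)
  rw [accPt_iff_nhds] at h
  obtain ⟨y, hy, hne⟩ := h V (hV.mem_nhds hx)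
  exact ⟨y, hy.1, hne⟩

lemma totSep : TotallySeparatedSpace C :=
  loc_compact_t2_tot_disc_iff_tot_sep.mp inferInstance

lemma split_clopen (hperf : Perfect (univ : Set C)) {V : Set C} (hV : IsClopen V)
    (hVne : V.Nonempty) :
    ∃ A B : Set C, IsClopen A ∧ A.Nonempty ∧ IsClopen B ∧ B.Nonempty ∧
      A ⊆ V ∧ B ⊆ V ∧ Disjoint A B := by
  obtain ⟨x, hx⟩ := hVne
  obtain ⟨y, hyV, hyx⟩ := exists_ne_in_open hperf hV.2 hx
  haveI := totSep (C := C)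
  obtain ⟨Z, hZ, hxZ, hyZ⟩ := exists_isClopen_of_totally_separated (Ne.symm hyx)
  refine ⟨V ∩ Z, V \ Z, hV.inter hZ, ⟨x, hx, hxZ⟩, hV.diff hZ, ⟨y, hyV, hyZ⟩, inter_subset_left,
    diff_subset, ?_⟩
  exact disjoint_sdiff_self_right.mono_left inter_subset_right

lemma exists_disjoint_clopens (hperf : Perfect (univ : Set C)) :
    ∃ U : ℕ → Set C, (∀ m, IsClopen (U m)) ∧ (∀ m, (U m).Nonempty) ∧
      ∀ i j, i ≠ j → Disjoint (U i) (U j) := by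
  classical
  have hex : ∀ W : Set C, IsClopen W → W.Nonempty → ∃ A : Set C, ∃ W' : Set C,
      IsClopen A ∧ A.Nonempty ∧ IsClopen W' ∧ W'.Nonempty ∧ A ⊆ W ∧ W' ⊆ W ∧ Disjoint A W' :=
    fun W hW hWne => by
      obtain ⟨A, B, h1, h2, h3, h4, h5, h6, h7⟩ := split_clopen hperf hW hWne
      exact ⟨A, B, h1, h2, h3, h4, h5, h6, h7⟩
  choose fA fW h1 h2 h3 h4 h5 h6 h7 using hex
  let W : ℕ → {V : Set C // IsClopen V ∧ V.Nonempty} := fun n =>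
    Nat.rec ⟨univ, isClopen_univ, univ_nonempty⟩
      (fun _ p => ⟨fW p.1 p.2.1 p.2.2, h3 p.1 p.2.1 p.2.2, h4 p.1 p.2.1 p.2.2⟩) n
  have hWsucc : ∀ n, (W (n+1)).1 ⊆ (W n).1 := fun n => h6 (W n).1 (W n).2.1 (W n).2.2
  have hWmono : ∀ i j, i ≤ j → (W j).1 ⊆ (W i).1 := by
    intro i j hij
    induction j with
    | zero => simp_all
    | succ k ih =>
      rcases Nat.lt_or_ge i (k+1) with h | h
      · exact (hWsucc k).trans (ih (Nat.lt_succ_iff.mp h))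
      · have : i = k + 1 := le_antisymm hij h
        subst this; exact subset_rfl
  refine ⟨fun n => fA (W n).1 (W n).2.1 (W n).2.2, fun n => h1 _ _ _, fun n => h2 _ _ _, ?_⟩
  have key : ∀ i j, i < j → Disjoint (fA (W i).1 (W i).2.1 (W i).2.2) (fA (W j).1 (W j).2.1 (W j).2.2) := by
    intro i j hij
    have hUj : fA (W j).1 (W j).2.1 (W j).2.2 ⊆ (W (i+1)).1 :=
      (h5 (W j).1 (W j).2.1 (W j).2.2).trans (hWmono (i+1) j hij)
    exact ((h7 (W i).1 (W i).2.1 (W i).2.2).mono_right hUj)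
  intro i j hij
  rcases Nat.lt_or_ge i j with h | h
  · exact key i j h
  · exact (key j i (lt_of_le_of_ne h (Ne.symm hij))).symm

lemma exists_mesh (ε : ℝ) (hε : 0 < ε) :
    ∃ c : C → ℕ, (∀ x : C, IsOpen {y | c y = c x}) ∧ ∀ x y : C, c x = c y → dist x y ≤ ε := by
  classical
  have h1 : ∀ x : C, ∃ Z : Set C, IsClopen Z ∧ x ∈ Z ∧ Z ⊆ Metric.ball x (ε/2) := fun x =>
    compact_exists_isClopen_in_isOpen Metric.isOpen_ball (Metric.mem_ball_self (by linarith))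
  choose Z hZc hZx hZb using h1
  obtain ⟨t, ht⟩ := (isCompact_univ (X := C)).elim_finite_subcover Z (fun x => (hZc x).2)
    (fun x _ => mem_iUnion.2 ⟨x, hZx x⟩)
  set L := t.toList with hL
  let P : ℕ → Set C := fun n => if h : n < L.length then Z (L.get ⟨n, h⟩) else ∅
  have hPc : ∀ n, IsClopen (P n) := by
    intro n
    by_cases h : n < L.length
    · simpa [P, h] using hZc (L.get ⟨n, h⟩)
    · simpa [P, h] using isClopen_empty
  have hne : ∀ x : C, ∃ n, x ∈ P n := by
    intro x
    obtain ⟨i, hi, hx⟩ := by simpa using ht (mem_univ x)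
    have hmem : i ∈ L := by simpa [hL] using hi
    obtain ⟨n, hn⟩ := List.get_of_mem hmem
    refine ⟨n.1, ?_⟩
    have h2 : P n.1 = Z (L.get n) := by simp [P, n.2]
    rw [h2, hn]
    exact hx
  let c : C → ℕ := fun x => Nat.find (hne x)
  have hcP : ∀ x, x ∈ P (c x) := fun x => Nat.find_spec (hne x)
  have hcmin : ∀ x m, m < c x → x ∉ P m := fun x m hm => Nat.find_min (hne x) hm
  refine ⟨c, ?_, ?_⟩
  · refine isOpen_fiber_of_locally _ ?_
    intro y
    refine ⟨P (c y) ∩ ⋂ m ∈ Finset.range (c y), (P m)ᶜ, ?_, ?_, ?_⟩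
    · exact ((hPc (c y)).2).inter (isOpen_biInter_finset (fun m _ => (hPc m).1.isOpen_compl))
    · refine ⟨hcP y, ?_⟩
      simp only [mem_iInter]
      intro m hm
      exact hcmin y m (Finset.mem_range.mp hm)
    · intro z hz
      have h1z : z ∈ P (c y) := hz.1
      have h2z : ∀ m < c y, z ∉ P m := by
        intro m hm
        have := hz.2
        simp only [mem_iInter] at this
        exact this m (Finset.mem_range.mpr hm)
      have : c z = c y := by
        refine le_antisymm (Nat.find_min' (hne z) h1z) ?_
        by_contra hcon
        push_neg at hcon
        exact h2z (c z) hcon (hcP z)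
      exact this
  · intro x y hxy
    have h1x := hcP x
    have h2y := hcP y
    rw [hxy] at h1x
    have hlt : c y < L.length := by
      by_contra h
      simp [P, h] at h2y
    set i := L.get ⟨c y, hlt⟩
    have hx' : x ∈ Z i := by simpa [P, hlt, i] using h1x
    have hy' : y ∈ Z i := by simpa [P, hlt, i] using h2y
    have d1 := hZb i hx'
    have d2 := hZb i hy'
    rw [Metric.mem_ball] at d1 d2
    have := dist_triangle x i y
    rw [dist_comm i y] at this
    linarith

variable (T : C → C)

lemma hitting_bound (hT : Continuous T)
    (hmin : ∀ x : C, Dense (Set.range fun n : ℕ => T^[n] x))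
    {U : Set C} (hU : IsOpen U) (hUne : U.Nonempty) :
    ∃ g : ℕ, ∀ x : C, ∃ j ≤ g, T^[j] x ∈ U := by
  have hcov : (univ : Set C) ⊆ ⋃ j : ℕ, (T^[j]) ⁻¹' U := by
    intro x _
    obtain ⟨z, ⟨n, rfl⟩, hn⟩ := (hmin x).exists_mem_open hU hUne
    exact mem_iUnion.2 ⟨n, hn⟩
  obtain ⟨t, ht⟩ := isCompact_univ.elim_finite_subcover _
    (fun j : ℕ => hU.preimage (hT.iterate j)) hcov
  refine ⟨t.sup id, fun x => ?_⟩
  obtain ⟨j, hj, hx⟩ := by simpa using ht (mem_univ x)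
  exact ⟨j, Finset.le_sup (f := id) hj, hx⟩

lemma T_surjective (hperf : Perfect (univ : Set C)) (hT : Continuous T)
    (hmin : ∀ x : C, Dense (Set.range fun n : ℕ => T^[n] x)) :
    Function.Surjective T := by
  have himg : IsClosed (range T) := (isCompact_range hT).isClosed
  have hsub : ∀ y z : C, z = y ∨ z ∈ range T := by
    intro y z
    have hden := hmin y
    have hz : z ∈ closure (range fun n : ℕ => T^[n] y) := by
      rw [hden.closure_eq]; trivial
    have hsub2 : (range fun n : ℕ => T^[n] y) ⊆ {y} ∪ range T := by
      rintro _ ⟨n, rfl⟩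
      cases n with
      | zero => exact Or.inl rfl
      | succ k => exact Or.inr ⟨T^[k] y, (Function.iterate_succ_apply' T k y).symm⟩
    have hclosed : IsClosed ({y} ∪ range T) := isClosed_singleton.union himg
    have := closure_minimal hsub2 hclosed hz
    simpa using this
  intro z
  obtain ⟨x⟩ := (inferInstance : Nonempty C)
  obtain ⟨y, _, hyx⟩ := exists_ne_in_open hperf isOpen_univ (mem_univ x)
  rcases hsub x z with h | h
  · rcases hsub y z with h2 | h2
    · exact absurd (h ▸ h2 : x = y) (Ne.symm hyx)
    · exact h2
  · exact h

/-! ## Coding data -/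

noncomputable instance : DecidableEq (ℕ × (ℕ → ℕ)) := Classical.decEq _

abbrev Code := ℕ × (ℕ → ℕ)

def succCode (r : ℕ) (p : Code) : Code :=
  (p.1 - 1, fun i => if i ≤ p.1 - 1 + r then p.2 (i+1) else 0)

structure Data (T : C → C) : Type _ where
  hT : Continuous T
  q : ℕ → C → ℕ
  U : ℕ → Set C
  g : ℕ → ℕ
  hq_open : ∀ m (x : C), IsOpen {y | q m y = q m x}
  hq_refine : ∀ m (x y : C), q (m+1) x = q (m+1) y → q m x = q m y
  hq_sep : ∀ x y : C, x ≠ y → ∃ m, q (m+1) x ≠ q (m+1) y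
  hq_U : ∀ m (x y : C), q (m+1) x = q (m+1) y → (x ∈ U (m+1) ↔ y ∈ U (m+1))
  hU_disj : ∀ i j, i ≠ j → Disjoint (U i) (U j)
  hit : ∀ m (x : C), ∃ j, j ≤ g m ∧ T^[j] x ∈ U m

namespace Data

variable {T : C → C} (D : Data T)

lemma hitex (m : ℕ) (x : C) : {j : ℕ | T^[j] x ∈ D.U m}.Nonempty := by
  obtain ⟨j, _, hj⟩ := D.hit m x
  exact ⟨j, hj⟩

noncomputable def n (m : ℕ) (x : C) : ℕ := sInf {j : ℕ | T^[j] x ∈ D.U m}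

lemma n_spec (m : ℕ) (x : C) : T^[D.n m x] x ∈ D.U m := Nat.sInf_mem (D.hitex m x)

lemma n_min {m : ℕ} {x : C} {k : ℕ} (hk : k < D.n m x) : T^[k] x ∉ D.U m :=
  Nat.notMem_of_lt_sInf hk

lemma n_le_g (m : ℕ) (x : C) : D.n m x ≤ D.g m := by
  obtain ⟨j, hjg, hj⟩ := D.hit m x
  exact le_trans (Nat.sInf_le hj) hjg

lemma n_eq_zero_iff (m : ℕ) (x : C) : D.n m x = 0 ↔ x ∈ D.U m := by
  constructor
  · intro h
    have := D.n_spec m x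
    rw [h] at this
    simpa using this
  · intro h
    exact Nat.le_antisymm (Nat.sInf_le (by simpa using h)) (Nat.zero_le _)

lemma n_pos {m : ℕ} {x : C} (hx : x ∉ D.U m) : 1 ≤ D.n m x := by
  rcases Nat.eq_zero_or_pos (D.n m x) with h | h
  · exact absurd ((D.n_eq_zero_iff m x).mp h) hx
  · exact h

lemma n_T {m : ℕ} {x : C} (hx : x ∉ D.U m) : D.n m (T x) = D.n m x - 1 := by
  have h1 : 1 ≤ D.n m x := D.n_pos hx
  have hmem : ∀ j : ℕ, (T^[j] (T x) ∈ D.U m) ↔ T^[j+1] x ∈ D.U m := by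
    intro j
    rw [← Function.iterate_succ_apply]
  apply le_antisymm
  · apply Nat.sInf_le
    show T^[D.n m x - 1] (T x) ∈ D.U m
    rw [hmem]
    rw [Nat.sub_add_cancel h1]
    exact D.n_spec m x
  · by_contra hcon
    push_neg at hcon
    have hmem2 : T^[D.n m (T x)] (T x) ∈ D.U m := D.n_spec m (T x)
    rw [hmem] at hmem2
    have : D.n m x ≤ D.n m (T x) + 1 := Nat.sInf_le hmem2
    omega

noncomputable def r : ℕ → ℕ := fun m => Nat.rec 0 (fun k rk => D.g k + rk + 1) m

@[simp] lemma r_zero : D.r 0 = 0 := rfl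
@[simp] lemma r_succ (m : ℕ) : D.r (m+1) = D.g m + D.r m + 1 := rfl

noncomputable def psi : ℕ → C → Code
  | 0, _ => (0, fun _ => 0)
  | (m+1), x => (D.n (m+1) x,
      fun i => if i ≤ D.n (m+1) x + D.r (m+1) then D.q (m+1) (T^[i] x) + 1 else 0)

@[simp] lemma psi_zero (x : C) : D.psi 0 x = (0, fun _ => 0) := rfl

lemma psi_succ (m : ℕ) (x : C) : D.psi (m+1) x = (D.n (m+1) x,
    fun i => if i ≤ D.n (m+1) x + D.r (m+1) then D.q (m+1) (T^[i] x) + 1 else 0) := rfl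

lemma psi_fst (m : ℕ) (x : C) : (D.psi (m+1) x).1 = D.n (m+1) x := rfl

/-- if long q-itineraries agree then codes agree -/
lemma agree (m : ℕ) (x y : C)
    (h : ∀ i ≤ D.g (m+1) + D.r (m+1), D.q (m+1) (T^[i] x) = D.q (m+1) (T^[i] y)) :
    D.psi (m+1) x = D.psi (m+1) y := by
  have hU : ∀ i ≤ D.g (m+1), (T^[i] x ∈ D.U (m+1) ↔ T^[i] y ∈ D.U (m+1)) := by
    intro i hi
    exact D.hq_U m _ _ (h i (le_trans hi (Nat.le_add_right _ _)))
  have hn : D.n (m+1) x = D.n (m+1) y := by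
    apply le_antisymm
    · apply Nat.sInf_le
      show T^[D.n (m+1) y] x ∈ D.U (m+1)
      exact (hU _ (D.n_le_g (m+1) y)).mpr (D.n_spec (m+1) y)
    · apply Nat.sInf_le
      show T^[D.n (m+1) x] y ∈ D.U (m+1)
      exact (hU _ (D.n_le_g (m+1) x)).mp (D.n_spec (m+1) x)
  rw [psi_succ, psi_succ, hn]
  refine Prod.ext rfl ?_
  show (fun i => if i ≤ D.n (m+1) y + D.r (m+1) then D.q (m+1) (T^[i] x) + 1 else 0) = _
  funext i
  by_cases hi : i ≤ D.n (m+1) y + D.r (m+1)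
  · simp only [hi, if_pos]
    have : i ≤ D.g (m+1) + D.r (m+1) :=
      le_trans hi (Nat.add_le_add_right (D.n_le_g (m+1) y) _)
    rw [h i this]
  · simp only [hi, if_neg, not_false_iff]

/-- K1 : code of `T x` is the successor code -/
lemma psi_T {m : ℕ} {x : C} (hx : x ∉ D.U (m+1)) :
    D.psi (m+1) (T x) = succCode (D.r (m+1)) (D.psi (m+1) x) := by
  have h1 : 1 ≤ D.n (m+1) x := D.n_pos hx
  have hn : D.n (m+1) (T x) = D.n (m+1) x - 1 := D.n_T hx
  rw [psi_succ, psi_succ, succCode]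
  refine Prod.ext (by simpa using hn) ?_
  funext i
  simp only [hn, psi_fst]
  by_cases hi : i ≤ D.n (m+1) x - 1 + D.r (m+1)
  · have hi1 : i + 1 ≤ D.n (m+1) x + D.r (m+1) := by omega
    simp only [hi, if_pos, hi1]
    rw [← Function.iterate_succ_apply]
  · simp only [hi, if_neg, not_false_iff]

/-- K2 : refinement -/
lemma psi_refine (m : ℕ) (x y : C) (h : D.psi (m+1) x = D.psi (m+1) y) :
    D.psi m x = D.psi m y := by
  cases m with
  | zero => rfl
  | succ k =>
    have hn : D.n (k+2) x = D.n (k+2) y := by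
      have := congrArg Prod.fst h
      simpa [psi_fst] using this
    have hw := congrArg Prod.snd h
    have hq1 : ∀ i ≤ D.g (k+1) + D.r (k+1), D.q (k+1) (T^[i] x) = D.q (k+1) (T^[i] y) := by
      intro i hi
      have hir : i ≤ D.n (k+2) x + D.r (k+2) := by
        have : D.r (k+2) = D.g (k+1) + D.r (k+1) + 1 := rfl
        omega
      have hir' : i ≤ D.n (k+2) y + D.r (k+2) := by rw [← hn]; exact hir
      have hwi := congrFun hw i
      simp only [psi_succ] at hwi
      rw [if_pos hir, if_pos hir'] at hwi
      exact D.hq_refine (k+1) _ _ (Nat.succ_injective hwi)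
    exact D.agree k x y hq1

/-- K3 -/
lemma psi_ne (m : ℕ) (x y : C) (hq : D.q (m+1) x ≠ D.q (m+1) y) :
    D.psi (m+1) x ≠ D.psi (m+1) y := by
  intro h
  have hw := congrFun (congrArg Prod.snd h) 0
  simp only [psi_succ] at hw
  rw [if_pos (Nat.zero_le _), if_pos (Nat.zero_le _)] at hw
  simp only [Function.iterate_zero_apply] at hw
  exact hq (Nat.succ_injective hw)

/-- K4 : fibers of the code maps are open -/
lemma psi_fiber_open (m : ℕ) (x : C) : IsOpen {y | D.psi m y = D.psi m x} := by
  cases m with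
  | zero =>
    have : {y : C | D.psi 0 y = D.psi 0 x} = univ := by
      ext z; simp [psi_zero]
    rw [this]; exact isOpen_univ
  | succ k =>
    refine isOpen_fiber_of_locally (C := C) _ ?_ x
    intro y
    refine ⟨⋂ i ∈ Finset.range (D.g (k+1) + D.r (k+1) + 1),
        T^[i] ⁻¹' {w | D.q (k+1) w = D.q (k+1) (T^[i] y)}, ?_, ?_, ?_⟩
    · exact isOpen_biInter_finset fun i _ =>
        (D.hq_open (k+1) (T^[i] y)).preimage (D.hT.iterate i)
    · simp only [mem_iInter, mem_preimage, mem_setOf_eq]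
      intro i _; trivial
    · intro z hz
      simp only [mem_iInter, mem_preimage, mem_setOf_eq] at hz
      exact D.agree k z y (fun i hi => hz i (Finset.mem_range.mpr (by omega)))

lemma psi_fiber_closed (m : ℕ) (x : C) : IsClosed {y | D.psi m y = D.psi m x} := by
  rw [← isOpen_compl_iff]
  rw [isOpen_iff_forall_mem_open]
  intro z hz
  refine ⟨{y | D.psi m y = D.psi m z}, ?_, D.psi_fiber_open m z, rfl⟩
  intro w hw
  simp only [mem_compl_iff, mem_setOf_eq] at *
  rw [hw]; exact hz

lemma psi_range_finite (m : ℕ) : (range (D.psi m)).Finite :=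
  finite_range_of_open_fibers (C := C) _ (D.psi_fiber_open m)

lemma sepStage {x y : C} (hxy : x ≠ y) :
    ∃ t : ℕ, D.psi t x = D.psi t y ∧ D.psi (t+1) x ≠ D.psi (t+1) y := by
  have hex : ∃ m, D.psi m x ≠ D.psi m y := by
    obtain ⟨m, hm⟩ := D.hq_sep x y hxy
    exact ⟨m+1, D.psi_ne m x y hm⟩
  have hmem : D.psi (sInf {m | D.psi m x ≠ D.psi m y}) x
      ≠ D.psi (sInf {m | D.psi m x ≠ D.psi m y}) y := Nat.sInf_mem hex
  have hs1 : sInf {m | D.psi m x ≠ D.psi m y} ≠ 0 := by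
    intro h0; rw [h0] at hmem; exact hmem rfl
  obtain ⟨t, ht⟩ := Nat.exists_eq_succ_of_ne_zero hs1
  rw [ht] at hmem
  refine ⟨t, ?_, hmem⟩
  by_contra hne
  have : t < sInf {m | D.psi m x ≠ D.psi m y} := by omega
  exact (Nat.notMem_of_lt_sInf this) hne

lemma eq_of_all_psi {x y : C} (h : ∀ m, D.psi m x = D.psi m y) : x = y := by
  by_contra hxy
  obtain ⟨m, hm⟩ := D.hq_sep x y hxy
  exact D.psi_ne m x y hm (h (m+1))

/-! ## Interval scheme -/

noncomputable def lst (m : ℕ) : List Code := (D.psi_range_finite m).toFinset.toList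

lemma mem_lst (m : ℕ) (x : C) : D.psi m x ∈ D.lst m := by
  rw [lst, Finset.mem_toList, Set.Finite.mem_toFinset]
  exact ⟨x, rfl⟩

noncomputable def lam (m : ℕ) : ℕ := (D.lst m).length

noncomputable def lam' (m : ℕ) : ℕ := D.lam m + 1

lemma lam'_pos (m : ℕ) : (1 : ℝ) ≤ (D.lam' m : ℝ) := by
  have : (1:ℕ) ≤ D.lam' m := Nat.le_add_left 1 _
  exact_mod_cast this

noncomputable def idx (m : ℕ) (c : Code) : ℕ := (D.lst m).idxOf c

lemma idx_lt (m : ℕ) (x : C) : D.idx m (D.psi m x) < D.lam m :=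
  List.idxOf_lt_length_iff.mpr (D.mem_lst m x)

lemma idx_inj (m : ℕ) (x y : C) (h : D.idx m (D.psi m x) = D.idx m (D.psi m y)) :
    D.psi m x = D.psi m y :=
  (List.idxOf_inj (D.mem_lst m x) (y := D.psi m y)).mp h

noncomputable def alpha (m : ℕ) : ℝ := 4 * (D.lam' (m+1) : ℝ)

lemma alpha_ge_four (m : ℕ) : 4 ≤ D.alpha m := by
  have := D.lam'_pos (m+1)
  rw [alpha]; nlinarith

lemma alpha_pos (m : ℕ) : 0 < D.alpha m := lt_of_lt_of_le (by norm_num) (D.alpha_ge_four m)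

lemma alpha_ge_one (m : ℕ) : 1 ≤ D.alpha m := le_trans (by norm_num) (D.alpha_ge_four m)

noncomputable def beta : ℕ → ℝ := fun m =>
  Nat.rec 1 (fun k bk => bk / (2^(k+2) * (D.lam' (k+1) : ℝ) * D.alpha (k+1) ^ (D.g (k+1)))) m

@[simp] lemma beta_zero : D.beta 0 = 1 := rfl

lemma beta_succ (m : ℕ) :
    D.beta (m+1) = D.beta m / (2^(m+2) * (D.lam' (m+1) : ℝ) * D.alpha (m+1) ^ (D.g (m+1))) := rfl

lemma beta_pos (m : ℕ) : 0 < D.beta m := by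
  induction m with
  | zero => norm_num
  | succ k ih =>
    rw [beta_succ]
    apply div_pos ih
    have h1 : (0:ℝ) < 2^(k+2) := by positivity
    have h2 : (0:ℝ) < (D.lam' (k+1) : ℝ) := lt_of_lt_of_le one_pos (D.lam'_pos (k+1))
    have h3 : (0:ℝ) < D.alpha (k+1) ^ (D.g (k+1)) := pow_pos (D.alpha_pos (k+1)) _
    positivity

lemma beta_le_one (m : ℕ) : D.beta m ≤ 1 := by
  induction m with
  | zero => norm_num
  | succ k ih =>
    rw [beta_succ]
    have hden : (1:ℝ) ≤ 2^(k+2) * (D.lam' (k+1) : ℝ) * D.alpha (k+1) ^ (D.g (k+1)) := by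
      have h1 : (1:ℝ) ≤ 2^(k+2) := one_le_pow₀ (by norm_num : (1:ℝ) ≤ 2)
      have h2 := D.lam'_pos (k+1)
      have h3 : (1:ℝ) ≤ D.alpha (k+1) ^ (D.g (k+1)) := one_le_pow₀ (D.alpha_ge_one (k+1))
      have h12 : (1:ℝ) ≤ 2^(k+2) * (D.lam' (k+1) : ℝ) := by nlinarith
      nlinarith
    calc D.beta k / (2^(k+2) * (D.lam' (k+1) : ℝ) * D.alpha (k+1) ^ (D.g (k+1)))
        ≤ D.beta k / 1 := by gcongr; exact (D.beta_pos k).le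
      _ = D.beta k := by norm_num
      _ ≤ 1 := ih

noncomputable def Dfun (m : ℕ) (c : Code) : ℝ := D.beta m * D.alpha m ^ (min c.1 (D.g m))

lemma Dfun_pos (m : ℕ) (c : Code) : 0 < D.Dfun m c :=
  mul_pos (D.beta_pos m) (pow_pos (D.alpha_pos m) _)

lemma Dfun_le_max (m : ℕ) (c : Code) : D.Dfun m c ≤ D.beta m * D.alpha m ^ (D.g m) := by
  apply mul_le_mul_of_nonneg_left _ (D.beta_pos m).le
  exact pow_le_pow_right₀ (D.alpha_ge_one m) (min_le_right _ _)

lemma beta_le_Dfun (m : ℕ) (c : Code) : D.beta m ≤ D.Dfun m c := by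
  have h : (1:ℝ) ≤ D.alpha m ^ (min c.1 (D.g m)) := one_le_pow₀ (D.alpha_ge_one m)
  rw [Dfun]
  nlinarith [D.beta_pos m]

lemma max_succ_eq (m : ℕ) :
    D.beta (m+1) * D.alpha (m+1) ^ (D.g (m+1)) = D.beta m / (2^(m+2) * (D.lam' (m+1) : ℝ)) := by
  rw [beta_succ]
  have h3 : (0:ℝ) < D.alpha (m+1) ^ (D.g (m+1)) := pow_pos (D.alpha_pos (m+1)) _
  have h2 : (0:ℝ) < (D.lam' (m+1) : ℝ) := lt_of_lt_of_le one_pos (D.lam'_pos (m+1))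
  field_simp

noncomputable def parent (m : ℕ) (c : Code) : Code :=
  @dite _ (∃ x : C, D.psi (m+1) x = c) (Classical.dec _)
    (fun h => D.psi m h.choose) (fun _ => (0, fun _ => 0))

lemma parent_psi (m : ℕ) (x : C) : D.parent m (D.psi (m+1) x) = D.psi m x := by
  rw [parent]
  rw [dif_pos (⟨x, rfl⟩ : ∃ z : C, D.psi (m+1) z = D.psi (m+1) x)]
  exact D.psi_refine m _ x (Exists.choose_spec (⟨x, rfl⟩ : ∃ z : C, D.psi (m+1) z = D.psi (m+1) x))

noncomputable def Lf : ℕ → Code → ℝ := fun m =>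
  Nat.rec (fun _ => 0)
    (fun k Lk c => Lk (D.parent k c) +
      (D.idx (k+1) c : ℝ) * (D.Dfun k (D.parent k c) / (D.lam' (k+1) : ℝ))) m

@[simp] lemma Lf_zero (c : Code) : D.Lf 0 c = 0 := rfl

lemma Lf_succ (m : ℕ) (c : Code) : D.Lf (m+1) c = D.Lf m (D.parent m c) +
    (D.idx (m+1) c : ℝ) * (D.Dfun m (D.parent m c) / (D.lam' (m+1) : ℝ)) := rfl

lemma Lf_succ_psi (m : ℕ) (x : C) : D.Lf (m+1) (D.psi (m+1) x) = D.Lf m (D.psi m x) +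
    (D.idx (m+1) (D.psi (m+1) x) : ℝ) * (D.Dfun m (D.psi m x) / (D.lam' (m+1) : ℝ)) := by
  rw [Lf_succ, parent_psi]

lemma L_mono_succ (m : ℕ) (x : C) : D.Lf m (D.psi m x) ≤ D.Lf (m+1) (D.psi (m+1) x) := by
  rw [Lf_succ_psi]
  have h1 : (0:ℝ) ≤ (D.idx (m+1) (D.psi (m+1) x) : ℝ) := Nat.cast_nonneg _
  have h2 : (0:ℝ) < D.Dfun m (D.psi m x) / (D.lam' (m+1) : ℝ) :=
    div_pos (D.Dfun_pos m _) (lt_of_lt_of_le one_pos (D.lam'_pos (m+1)))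
  nlinarith

lemma D_succ_le (m : ℕ) (x : C) :
    D.Dfun (m+1) (D.psi (m+1) x) ≤ D.Dfun m (D.psi m x) / (2 * (D.lam' (m+1) : ℝ)) := by
  have h1 : D.Dfun (m+1) (D.psi (m+1) x) ≤ D.beta m / (2^(m+2) * (D.lam' (m+1) : ℝ)) := by
    rw [← D.max_succ_eq m]; exact D.Dfun_le_max (m+1) _
  have h2 : D.beta m ≤ D.Dfun m (D.psi m x) := D.beta_le_Dfun m _
  have hl : (1:ℝ) ≤ (D.lam' (m+1) : ℝ) := D.lam'_pos (m+1)
  have h3 : (2:ℝ) ≤ 2^(m+2) := by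
    calc (2:ℝ) = 2^1 := by norm_num
    _ ≤ 2^(m+2) := pow_le_pow_right₀ (by norm_num) (by omega)
  have h4 : D.beta m / (2^(m+2) * (D.lam' (m+1) : ℝ)) ≤ D.beta m / (2 * (D.lam' (m+1) : ℝ)) := by
    gcongr
    exact (D.beta_pos m).le
  have h5 : D.beta m / (2 * (D.lam' (m+1) : ℝ)) ≤ D.Dfun m (D.psi m x) / (2 * (D.lam' (m+1) : ℝ)) := by
    have hd : (0:ℝ) < 2 * (D.lam' (m+1) : ℝ) := by nlinarith
    exact (div_le_div_iff_of_pos_right hd).mpr h2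
  linarith

lemma LD_succ_le (m : ℕ) (x : C) :
    D.Lf (m+1) (D.psi (m+1) x) + D.Dfun (m+1) (D.psi (m+1) x)
      ≤ D.Lf m (D.psi m x) + D.Dfun m (D.psi m x) := by
  have hl : (1:ℝ) ≤ (D.lam' (m+1) : ℝ) := D.lam'_pos (m+1)
  set s := D.Dfun m (D.psi m x) / (D.lam' (m+1) : ℝ) with hs
  have hspos : 0 < s := div_pos (D.Dfun_pos m _) (by linarith)
  have hidx : (D.idx (m+1) (D.psi (m+1) x) : ℝ) + 1 ≤ (D.lam (m+1) : ℝ) := by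
    exact_mod_cast D.idx_lt (m+1) x
  have hlam : (D.lam' (m+1) : ℝ) = (D.lam (m+1) : ℝ) + 1 := by
    rw [lam']; push_cast; ring
  have hD2 : D.Dfun (m+1) (D.psi (m+1) x) ≤ s / 2 := by
    have h1 := D.D_succ_le m x
    have h2 : D.Dfun m (D.psi m x) / (2 * (D.lam' (m+1) : ℝ)) = s / 2 := by
      rw [hs]; ring
    linarith
  have hLD : D.Lf (m+1) (D.psi (m+1) x)
      = D.Lf m (D.psi m x) + (D.idx (m+1) (D.psi (m+1) x) : ℝ) * s := by
    rw [D.Lf_succ_psi m x]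
  have hDs : D.Dfun m (D.psi m x) = (D.lam' (m+1) : ℝ) * s := by
    rw [hs]
    field_simp
  rw [hLD, hDs]
  nlinarith [hspos, hidx, hlam]

noncomputable def pi (x : C) : ℝ := ⨆ m, D.Lf m (D.psi m x)

lemma L_mono (x : C) : Monotone fun m => D.Lf m (D.psi m x) :=
  monotone_nat_of_le_succ (fun m => D.L_mono_succ m x)

lemma LD_anti (x : C) : Antitone fun m => D.Lf m (D.psi m x) + D.Dfun m (D.psi m x) :=
  antitone_nat_of_succ_le (fun m => D.LD_succ_le m x)

lemma L_le_LD (x : C) (k m : ℕ) :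
    D.Lf k (D.psi k x) ≤ D.Lf m (D.psi m x) + D.Dfun m (D.psi m x) := by
  rcases le_total k m with h | h
  · have := D.L_mono x h
    have hD := (D.Dfun_pos m (D.psi m x)).le
    simp only at this
    linarith
  · have := D.LD_anti x h
    have hD := (D.Dfun_pos k (D.psi k x)).le
    simp only at this
    linarith

lemma bddA (x : C) : BddAbove (range fun m => D.Lf m (D.psi m x)) := by
  refine ⟨D.Lf 0 (D.psi 0 x) + D.Dfun 0 (D.psi 0 x), ?_⟩
  rintro _ ⟨k, rfl⟩
  exact D.L_le_LD x k 0

lemma pi_ge (m : ℕ) (x : C) : D.Lf m (D.psi m x) ≤ D.pi x := le_ciSup (D.bddA x) m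

lemma pi_le (m : ℕ) (x : C) :
    D.pi x ≤ D.Lf m (D.psi m x) + D.Dfun m (D.psi m x) :=
  ciSup_le (fun k => D.L_le_LD x k m)

lemma pi_dist_le (m : ℕ) (x y : C) (h : D.psi m x = D.psi m y) :
    |D.pi x - D.pi y| ≤ D.Dfun m (D.psi m x) := by
  rw [abs_sub_le_iff]
  constructor
  · have h1 := D.pi_le m x
    have h2 := D.pi_ge m y
    rw [← h] at h2
    linarith
  · have h1 := D.pi_le m y
    have h2 := D.pi_ge m x
    rw [← h] at h1
    linarith

lemma pi_gap (m : ℕ) (x y : C) (hm : D.psi m x = D.psi m y)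
    (hne : D.psi (m+1) x ≠ D.psi (m+1) y) :
    D.Dfun m (D.psi m x) / (2 * (D.lam' (m+1) : ℝ)) ≤ |D.pi x - D.pi y| := by
  have hl : (1:ℝ) ≤ (D.lam' (m+1) : ℝ) := D.lam'_pos (m+1)
  set s := D.Dfun m (D.psi m x) / (D.lam' (m+1) : ℝ) with hs
  have hspos : 0 < s := div_pos (D.Dfun_pos m _) (by linarith)
  have hhalf : D.Dfun m (D.psi m x) / (2 * (D.lam' (m+1) : ℝ)) = s / 2 := by
    rw [hs]; ring
  have key : ∀ u v : C, D.psi m u = D.psi m x → D.psi m v = D.psi m x →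
      D.idx (m+1) (D.psi (m+1) u) < D.idx (m+1) (D.psi (m+1) v) →
      s / 2 ≤ D.pi v - D.pi u := by
    intro u v hu hv hlt
    have hDu : D.Dfun m (D.psi m u) = D.Dfun m (D.psi m x) := by rw [hu]
    have hDv : D.Dfun m (D.psi m v) = D.Dfun m (D.psi m x) := by rw [hv]
    have hpiu : D.pi u ≤ D.Lf m (D.psi m u)
        + (D.idx (m+1) (D.psi (m+1) u) : ℝ) * s + s / 2 := by
      have h1 := D.pi_le (m+1) u
      rw [D.Lf_succ_psi m u] at h1
      have h2 : D.Dfun (m+1) (D.psi (m+1) u) ≤ s / 2 := by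
        have h3 := D.D_succ_le m u
        rw [hDu] at h3
        have h4 : D.Dfun m (D.psi m x) / (2 * (D.lam' (m+1) : ℝ)) = s / 2 := hhalf
        linarith
      rw [hDu] at h1
      rw [← hs] at h1
      linarith
    have hpiv : D.Lf m (D.psi m v) + (D.idx (m+1) (D.psi (m+1) v) : ℝ) * s ≤ D.pi v := by
      have h1 := D.pi_ge (m+1) v
      rw [D.Lf_succ_psi m v] at h1
      rw [hDv, ← hs] at h1
      exact h1
    have hLuv : D.Lf m (D.psi m u) = D.Lf m (D.psi m v) := by rw [hu, hv]
    have hcast : (D.idx (m+1) (D.psi (m+1) u) : ℝ) + 1 ≤ (D.idx (m+1) (D.psi (m+1) v) : ℝ) := by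
      exact_mod_cast hlt
    nlinarith
  have hne' : D.idx (m+1) (D.psi (m+1) x) ≠ D.idx (m+1) (D.psi (m+1) y) := by
    intro h
    exact hne (D.idx_inj (m+1) x y h)
  rw [hhalf]
  rcases lt_or_gt_of_ne hne' with h | h
  · have := key x y rfl hm.symm h
    have h2 : D.pi y - D.pi x ≤ |D.pi x - D.pi y| := by
      rw [abs_sub_comm]
      exact le_abs_self _
    linarith
  · have := key y x hm.symm rfl h
    have h2 : D.pi x - D.pi y ≤ |D.pi x - D.pi y| := le_abs_self _
    linarith

lemma Dfun_T (m : ℕ) {x : C} (hx : x ∉ D.U (m+1)) :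
    D.Dfun (m+1) (D.psi (m+1) (T x)) = D.Dfun (m+1) (D.psi (m+1) x) / D.alpha (m+1) := by
  have h1 : 1 ≤ D.n (m+1) x := D.n_pos hx
  have hng : D.n (m+1) x ≤ D.g (m+1) := D.n_le_g _ _
  obtain ⟨k, hk⟩ : ∃ k, D.n (m+1) x = k + 1 := ⟨D.n (m+1) x - 1, by omega⟩
  have hTn : (D.psi (m+1) (T x)).1 = k := by rw [psi_fst, D.n_T hx, hk]; omega
  have hxn : (D.psi (m+1) x).1 = k + 1 := by rw [psi_fst, hk]
  rw [Dfun, Dfun, hTn, hxn]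
  rw [min_eq_left (by omega), min_eq_left (by omega)]
  rw [eq_div_iff (ne_of_gt (D.alpha_pos (m+1)))]
  rw [mul_assoc, ← pow_succ]

lemma pi_contract (m : ℕ) (x y : C) (hx : x ∉ D.U (m+1))
    (hm : D.psi (m+1) x = D.psi (m+1) y) :
    |D.pi (T x) - D.pi (T y)| ≤ D.Dfun (m+1) (D.psi (m+1) x) / D.alpha (m+1) := by
  have hny : D.n (m+1) y = D.n (m+1) x := by
    have := congrArg Prod.fst hm
    simpa [psi_fst] using this.symm
  have hy : y ∉ D.U (m+1) := by
    intro hyU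
    have h0 := (D.n_eq_zero_iff (m+1) y).mpr hyU
    have h1 := D.n_pos hx
    omega
  have hsucc : D.psi (m+1) (T x) = D.psi (m+1) (T y) := by
    rw [D.psi_T hx, D.psi_T hy, hm]
  have hle := D.pi_dist_le (m+1) (T x) (T y) hsucc
  rw [D.Dfun_T m hx] at hle
  exact hle

lemma Dpsi_le (m : ℕ) (x : C) : D.Dfun m (D.psi m x) ≤ (1/2)^m := by
  cases m with
  | zero =>
    have : (D.psi 0 x).1 = 0 := rfl
    rw [Dfun, this]
    simp
  | succ k =>
    have h1 : D.Dfun (k+1) (D.psi (k+1) x) ≤ D.beta k / (2^(k+2) * (D.lam' (k+1) : ℝ)) := by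
      rw [← D.max_succ_eq k]
      exact D.Dfun_le_max (k+1) _
    have hl : (1:ℝ) ≤ (D.lam' (k+1) : ℝ) := D.lam'_pos (k+1)
    have hb : D.beta k ≤ 1 := D.beta_le_one k
    have hbp : 0 < D.beta k := D.beta_pos k
    have h2 : D.beta k / (2^(k+2) * (D.lam' (k+1) : ℝ)) ≤ 1 / 2^(k+1) := by
      rw [div_le_div_iff₀ (by positivity) (by positivity)]
      have h3 : (2:ℝ)^(k+1) ≤ 2^(k+2) := by
        apply pow_le_pow_right₀ (by norm_num)
        omega
      have e1 : D.beta k * 2^(k+1) ≤ 2^(k+1) := by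
        nlinarith [pow_pos (show (0:ℝ) < 2 by norm_num) (k+1)]
      have e2 : (2:ℝ)^(k+2) ≤ 2^(k+2) * (D.lam' (k+1) : ℝ) := by
        nlinarith [pow_pos (show (0:ℝ) < 2 by norm_num) (k+2)]
      linarith
    have h4 : ((1:ℝ)/2)^(k+1) = 1 / 2^(k+1) := by
      rw [div_pow]
      norm_num
    rw [h4]
    linarith

lemma psi_refine_le {k t : ℕ} (hkt : k ≤ t) {x y : C} (h : D.psi t x = D.psi t y) :
    D.psi k x = D.psi k y := by
  induction t with
  | zero =>
    have : k = 0 := by omega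
    subst this; exact h
  | succ u ih =>
    rcases Nat.lt_or_ge k (u+1) with hlt | hge
    · exact ih (by omega) (D.psi_refine u x y h)
    · have : k = u + 1 := by omega
      subst this; exact h

lemma pi_continuous : Continuous D.pi := by
  rw [continuous_iff_continuousAt]
  intro x
  unfold ContinuousAt
  rw [Metric.tendsto_nhds]
  intro ε hε
  obtain ⟨m, hm⟩ := exists_pow_lt_of_lt_one hε (by norm_num : (1:ℝ)/2 < 1)
  rw [Filter.eventually_iff_exists_mem]
  refine ⟨{y | D.psi m y = D.psi m x}, (D.psi_fiber_open m x).mem_nhds rfl, ?_⟩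
  intro y hy
  rw [Real.dist_eq]
  have h1 := D.pi_dist_le m y x hy
  have h2 := D.Dpsi_le m y
  calc |D.pi y - D.pi x| ≤ D.Dfun m (D.psi m y) := h1
    _ ≤ (1/2)^m := h2
    _ < ε := hm

lemma gap_pos (k : ℕ) (x : C) :
    0 < D.Dfun k (D.psi k x) / (2 * (D.lam' (k+1) : ℝ)) := by
  apply div_pos (D.Dfun_pos _ _)
  have := D.lam'_pos (k+1)
  linarith

lemma pi_injective : Function.Injective D.pi := by
  intro x y hxy
  by_contra hne
  obtain ⟨t, ht1, ht2⟩ := D.sepStage hne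
  have hgap := D.pi_gap t x y ht1 ht2
  rw [hxy] at hgap
  simp only [sub_self, abs_zero] at hgap
  exact absurd hgap (not_le.mpr (D.gap_pos t x))

lemma exists_excused_bound (x : C) : ∃ N : ℕ, ∀ m, x ∈ D.U m → m ≤ N := by
  by_cases h : ∃ m, x ∈ D.U m
  · obtain ⟨m₀, hm₀⟩ := h
    refine ⟨m₀, fun m hm => ?_⟩
    by_contra hc
    have hne : m ≠ m₀ := by omega
    exact Set.disjoint_left.mp (D.hU_disj m m₀ hne) hm hm₀
  · exact ⟨0, fun m hm => absurd ⟨m, hm⟩ h⟩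

/-- the locally radially shrinking property, at the level of `pi`. -/
lemma pi_lrs (x : C) : ∃ ε > 0, ∀ y : C, D.pi y ≠ D.pi x → |D.pi x - D.pi y| < ε →
    |D.pi (T x) - D.pi (T y)| < |D.pi x - D.pi y| := by
  obtain ⟨N, hN⟩ := D.exists_excused_bound x
  set γ : ℕ → ℝ := fun k => D.Dfun k (D.psi k x) / (2 * (D.lam' (k+1) : ℝ)) with hγ
  have hγpos : ∀ k, 0 < γ k := fun k => D.gap_pos k x
  have hnonempty : (Finset.range (N+1)).Nonempty := ⟨0, by simp⟩
  refine ⟨(Finset.range (N+1)).inf' hnonempty γ, ?_, ?_⟩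
  · rw [gt_iff_lt, Finset.lt_inf'_iff]
    exact fun k _ => hγpos k
  · intro y hne hlt
    have hxy : x ≠ y := fun h => hne (by rw [h])
    obtain ⟨t, ht1, ht2⟩ := D.sepStage hxy
    have hgap : γ t ≤ |D.pi x - D.pi y| := D.pi_gap t x y ht1 ht2
    have htN : N < t := by
      by_contra hcon
      push_neg at hcon
      have hinf : (Finset.range (N+1)).inf' hnonempty γ ≤ γ t :=
        Finset.inf'_le _ (by simp; omega)
      linarith
    obtain ⟨u, rfl⟩ : ∃ u, t = u + 1 := ⟨t - 1, by omega⟩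
    have hxU : x ∉ D.U (u+1) := fun h => by have := hN (u+1) h; omega
    have hcontract := D.pi_contract u x y hxU ht1
    have hkey : D.Dfun (u+1) (D.psi (u+1) x) / D.alpha (u+1) < γ (u+1) := by
      have hDpos := D.Dfun_pos (u+1) (D.psi (u+1) x)
      have hl := D.lam'_pos (u+2)
      have hα : D.alpha (u+1) = 4 * (D.lam' (u+2) : ℝ) := rfl
      rw [hγ, hα]
      rw [div_lt_div_iff₀ (by linarith) (by linarith)]
      nlinarith
    calc |D.pi (T x) - D.pi (T y)| ≤ D.Dfun (u+1) (D.psi (u+1) x) / D.alpha (u+1) := hcontract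
      _ < γ (u+1) := hkey
      _ ≤ |D.pi x - D.pi y| := hgap

lemma fiber_subset_open (x : C) {O : Set C} (hO : IsOpen O) (hxO : x ∈ O) :
    ∃ m, {y | D.psi m y = D.psi m x} ⊆ O := by
  by_contra hcon
  push_neg at hcon
  have hne : ∀ m, ({y | D.psi m y = D.psi m x} ∩ Oᶜ).Nonempty := by
    intro m
    obtain ⟨y, hy1, hy2⟩ := Set.not_subset.mp (hcon m)
    exact ⟨y, hy1, hy2⟩
  have hdec : ∀ m, ({y | D.psi (m+1) y = D.psi (m+1) x} ∩ Oᶜ)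
      ⊆ ({y | D.psi m y = D.psi m x} ∩ Oᶜ) :=
    fun m => inter_subset_inter_left _ (fun y hy => D.psi_refine m y x hy)
  have hclosed : ∀ m, IsClosed ({y | D.psi m y = D.psi m x} ∩ Oᶜ) :=
    fun m => (D.psi_fiber_closed m x).inter (isClosed_compl_iff.mpr hO)
  obtain ⟨y, hy⟩ := IsCompact.nonempty_iInter_of_sequence_nonempty_isCompact_isClosed
    _ hdec hne ((hclosed 0).isCompact) hclosed
  simp only [mem_iInter, mem_inter_iff] at hy
  have hyx : y = x := D.eq_of_all_psi (fun m => (hy m).1)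
  exact (hy 0).2 (by rw [hyx]; exact hxO)

end Data

lemma exists_data (hperf : Perfect (univ : Set C)) (T : C → C) (hT : Continuous T)
    (hmin : ∀ x : C, Dense (Set.range fun n : ℕ => T^[n] x)) : Nonempty (Data T) := by
  classical
  obtain ⟨U, hUc, hUne, hUdisj⟩ := exists_disjoint_clopens hperf
  have hc : ∀ m : ℕ, ∃ c : C → ℕ, (∀ x : C, IsOpen {y | c y = c x}) ∧
      ∀ x y : C, c x = c y → dist x y ≤ 1/(m+1) := fun m => exists_mesh _ (by positivity)
  choose c hcopen hcmesh using hc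
  have hg : ∀ m : ℕ, ∃ g : ℕ, ∀ x : C, ∃ j ≤ g, T^[j] x ∈ U m :=
    fun m => hitting_bound T hT hmin (hUc m).2 (hUne m)
  choose g hgspec using hg
  set e : ℕ → C → ℕ := fun m x => if x ∈ U m then 1 else 0 with he
  have heopen : ∀ m (x : C), IsOpen {y | e m y = e m x} := by
    intro m x
    by_cases hx : x ∈ U m
    · have hs : {y | e m y = e m x} = U m := by
        ext z
        simp only [he, mem_setOf_eq, if_pos hx]
        by_cases hz : z ∈ U m
        · simp [hz]
        · simp [hz]
      rw [hs]; exact (hUc m).2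
    · have hs : {y | e m y = e m x} = (U m)ᶜ := by
        ext z
        simp only [he, mem_setOf_eq, if_neg hx, mem_compl_iff]
        by_cases hz : z ∈ U m
        · simp [hz]
        · simp [hz]
      rw [hs]; exact (hUc m).1.isOpen_compl
  set q : ℕ → C → ℕ := fun m => Nat.rec (fun _ => 0)
    (fun k qk x => Nat.pair (qk x) (Nat.pair (c (k+1) x) (e (k+1) x))) m with hqdef
  have hq_succ : ∀ k (x : C), q (k+1) x = Nat.pair (q k x) (Nat.pair (c (k+1) x) (e (k+1) x)) :=
    fun k x => rfl
  have hq_iff : ∀ k (x y : C), q (k+1) x = q (k+1) y ↔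
      (q k x = q k y ∧ c (k+1) x = c (k+1) y ∧ e (k+1) x = e (k+1) y) := by
    intro k x y
    rw [hq_succ, hq_succ, Nat.pair_eq_pair, Nat.pair_eq_pair]
  refine ⟨⟨hT, q, U, g, ?_, ?_, ?_, ?_, hUdisj, ?_⟩⟩
  · -- open fibers
    intro m
    induction m with
    | zero =>
      intro x
      have : {y : C | q 0 y = q 0 x} = univ := by
        ext z; simp [hqdef]
      rw [this]; exact isOpen_univ
    | succ k ih =>
      intro x
      have : {y | q (k+1) y = q (k+1) x} =
          {y | q k y = q k x} ∩ ({y | c (k+1) y = c (k+1) x} ∩ {y | e (k+1) y = e (k+1) x}) := by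
        ext z
        simp only [mem_setOf_eq, mem_inter_iff]
        rw [hq_iff]
      rw [this]
      exact (ih x).inter ((hcopen (k+1) x).inter (heopen (k+1) x))
  · -- refine
    intro m x y h
    exact ((hq_iff m x y).mp h).1
  · -- separation
    intro x y hxy
    have hd : 0 < dist x y := dist_pos.mpr hxy
    obtain ⟨n, hn⟩ := exists_nat_one_div_lt hd
    refine ⟨n, fun h => ?_⟩
    have hcc : c (n+1) x = c (n+1) y := ((hq_iff n x y).mp h).2.1
    have hm := hcmesh (n+1) x y hcc
    push_cast at hm
    have h2 : (1:ℝ)/((n:ℝ)+1+1) ≤ 1/((n:ℝ)+1) := by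
      apply one_div_le_one_div_of_le
      · positivity
      · linarith
    linarith
  · -- U determination
    intro m x y h
    have hee : e (m+1) x = e (m+1) y := ((hq_iff m x y).mp h).2.2
    constructor
    · intro hx
      by_contra hy
      simp [he, hx, hy] at hee
    · intro hy
      by_contra hx
      simp [he, hx, hy] at hee
  · -- hitting
    intro m x
    obtain ⟨j, hj1, hj2⟩ := hgspec m x
    exact ⟨j, hj1, hj2⟩

end Slow

/-- Every minimal Cantor system `(C, T)` is topologically conjugate to a locally
radially shrinking system on a compact subset of `ℝ`: there are a compact set
`X ⊆ ℝ`, a map `f` which is a continuous surjection of `X` onto itself and satisfies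
the l.r.s. condition on `X`, and a homeomorphism `π` from `C` onto `X` with
`π ∘ T = f ∘ π`. -/
theorem minimal_Cantor_conjugate_to_lrs_on_real_compact
    {C : Type*} [MetricSpace C] [CompactSpace C] [Nonempty C]
    [TotallyDisconnectedSpace C] (hperf : Perfect (Set.univ : Set C))
    (T : C → C) (hT : Continuous T)
    (hmin : ∀ x : C, Dense (Set.range fun n : ℕ => T^[n] x)) :
    ∃ X : Set ℝ, IsCompact X ∧
      ∃ f : ℝ → ℝ, ContinuousOn f X ∧ Set.MapsTo f X X ∧ Set.SurjOn f X X ∧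
        (∀ x ∈ X, ∃ ε > 0, ∀ y ∈ X, y ≠ x → |x - y| < ε → |f x - f y| < |x - y|) ∧
        ∃ π : C → ℝ, Continuous π ∧ Function.Injective π ∧ Set.range π = X ∧
          ∀ c : C, π (T c) = f (π c) := by
  classical
  obtain ⟨D⟩ := Slow.exists_data hperf T hT hmin
  set π : C → ℝ := D.pi with hπ
  have hπc : Continuous π := D.pi_continuous
  have hπi : Function.Injective π := D.pi_injective
  set f : ℝ → ℝ := fun t => π (T (Function.invFun π t)) with hf
  have hinv : ∀ c : C, Function.invFun π (π c) = c := fun c =>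
    Function.leftInverse_invFun hπi c
  have hconj : ∀ c : C, π (T c) = f (π c) := by
    intro c
    rw [hf]
    simp only
    rw [hinv]
  have hTsurj := Slow.T_surjective T hperf hT hmin
  refine ⟨Set.range π, isCompact_range hπc, f, ?_, ?_, ?_, ?_, π, hπc, hπi, rfl, hconj⟩
  · -- ContinuousOn f (range π)
    rw [Metric.continuousOn_iff]
    rintro b ⟨x, rfl⟩ ε hε
    have hcT : ContinuousAt (fun y => π (T y)) x := (hπc.comp hT).continuousAt
    rw [Metric.continuousAt_iff] at hcT
    obtain ⟨δ₀, hδ₀, hball⟩ := hcT ε hε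
    obtain ⟨m, hm⟩ := D.fiber_subset_open x (Metric.isOpen_ball (x := x) (ε := δ₀))
      (Metric.mem_ball_self hδ₀)
    set γ : ℕ → ℝ := fun k => D.Dfun k (D.psi k x) / (2 * (D.lam' (k+1) : ℝ)) with hγ
    have hγpos : ∀ k, 0 < γ k := fun k => D.gap_pos k x
    have hnonempty : (Finset.range (m+1)).Nonempty := ⟨0, by simp⟩
    refine ⟨(Finset.range (m+1)).inf' hnonempty γ, ?_, ?_⟩
    · rw [gt_iff_lt, Finset.lt_inf'_iff]
      exact fun k _ => hγpos k
    · rintro a ⟨y, rfl⟩ hd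
      by_cases hxy : y = x
      · subst hxy
        simpa [Real.dist_eq] using hε
      · have hfib : D.psi m y = D.psi m x := by
          by_contra hne
          obtain ⟨t, ht1, ht2⟩ := D.sepStage (fun h => hxy h : y ≠ x)
          have htm : t < m := by
            by_contra hcon
            push_neg at hcon
            exact hne (D.psi_refine_le hcon ht1)
          have hgap := D.pi_gap t y x ht1 ht2
          have hgap' : γ t ≤ dist (π y) (π x) := by
            rw [Real.dist_eq]
            have hDeq : D.Dfun t (D.psi t y) = D.Dfun t (D.psi t x) := by rw [ht1]
            have : γ t = D.Dfun t (D.psi t y) / (2 * (D.lam' (t+1) : ℝ)) := by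
              rw [hγ, hDeq]
            rw [this]
            exact hgap
          have hinf : (Finset.range (m+1)).inf' hnonempty γ ≤ γ t :=
            Finset.inf'_le _ (by simp; omega)
          linarith
        have hyb : y ∈ Metric.ball x δ₀ := hm hfib
        have := hball (Metric.mem_ball.mp hyb)
        calc dist (f (π y)) (f (π x)) = dist (π (T y)) (π (T x)) := by
              rw [← hconj y, ← hconj x]
          _ < ε := this
  · rintro t ⟨x, rfl⟩
    exact ⟨T x, hconj x⟩
  · rintro t ⟨x, rfl⟩
    obtain ⟨b, rfl⟩ := hTsurj x
    exact ⟨π b, ⟨b, rfl⟩, (hconj b).symm⟩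
  · rintro ξ ⟨x, rfl⟩
    obtain ⟨ε, hε, hkey⟩ := D.pi_lrs x
    refine ⟨ε, hε, ?_⟩
    rintro η ⟨y, rfl⟩ hne hlt
    have h1 : D.pi y ≠ D.pi x := hne
    have h2 := hkey y h1 hlt
    rw [← hconj x, ← hconj y]
    exact h2
end

section
/- Let (Vᵢ, Eᵢ), i ≥ 0, be a sequence of finite graphs (Vᵢ a nonempty finite set, Eᵢ ⊆ Vᵢ × Vᵢ) each of which is edge surjective, and let φᵢ : V_{i+1} → Vᵢ be bd-covers, i.e., edge-preserving ((u,v) ∈ E_{i+1} implies (φᵢ(u), φᵢ(v)) ∈ Eᵢ) and bidirectional. Let V_𝒢 = {x ∈ ∏ᵢ Vᵢ : φᵢ(x_{i+1}) = xᵢ for all i ≥ 0} carry the subspace topology of the product of the discrete spaces Vᵢ, and let E_𝒢 = {(x,y) ∈ V_𝒢 × V_𝒢 : (xᵢ, yᵢ) ∈ Eᵢ for all i ≥ 0}. Then V_𝒢 is a compact, metrizable, zero-dimensional (totally disconnected) space, and the relation E_𝒢 is the graph of a homeomorphism of V_𝒢; that is, there exists a homeomorphism h : V_𝒢 → V_𝒢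 such that (x,y) ∈ E_𝒢 if and only if y = h(x). -/
/-- **Inverse limits of bd-covers.**
Let `(Vᵢ, Eᵢ)` be a sequence of edge-surjective finite graphs and `φᵢ : V_{i+1} → Vᵢ`
bidirectional graph homomorphisms (bd-covers).  Then the inverse limit
`V_𝒢 = {x ∈ Π Vᵢ : φᵢ(x_{i+1}) = xᵢ}` (with the product of the discrete topologies)
is a compact, metrizable, totally disconnected (zero-dimensional) space, and the
edge relation `E_𝒢 = {(x, y) : (xᵢ, yᵢ) ∈ Eᵢ for all i}` is the graph of a
homeomorphism of `V_𝒢`. -/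
theorem inverse_limit_of_bd_covers_is_homeomorphism
    (V : ℕ → Type) [∀ i, Fintype (V i)] [∀ i, Nonempty (V i)]
    [∀ i, TopologicalSpace (V i)] [∀ i, DiscreteTopology (V i)]
    (E : ∀ i, Set (V i × V i))
    (hedgesurj : ∀ i, ∀ v : V i,
      (∃ u : V i, (u, v) ∈ E i) ∧ (∃ w : V i, (v, w) ∈ E i))
    (φ : ∀ i, V (i + 1) → V i)
    (hhom : ∀ i, ∀ u v : V (i + 1), (u, v) ∈ E (i + 1) → (φ i u, φ i v) ∈ E i)
    (hbd_out : ∀ i, ∀ u v v' : V (i + 1),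
      (u, v) ∈ E (i + 1) → (u, v') ∈ E (i + 1) → φ i v = φ i v')
    (hbd_in : ∀ i, ∀ w w' u : V (i + 1),
      (w, u) ∈ E (i + 1) → (w', u) ∈ E (i + 1) → φ i w = φ i w') :
    CompactSpace {x : ∀ i, V i // ∀ i, φ i (x (i + 1)) = x i} ∧
    TopologicalSpace.MetrizableSpace {x : ∀ i, V i // ∀ i, φ i (x (i + 1)) = x i} ∧
    TotallyDisconnectedSpace {x : ∀ i, V i // ∀ i, φ i (x (i + 1)) = x i} ∧
    ∃ h : {x : ∀ i, V i // ∀ i, φ i (x (i + 1)) = x i} ≃ₜ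
          {x : ∀ i, V i // ∀ i, φ i (x (i + 1)) = x i},
      ∀ x y : {x : ∀ i, V i // ∀ i, φ i (x (i + 1)) = x i},
        (∀ i, (x.1 i, y.1 i) ∈ E i) ↔ y = h x := by
  classical
  -- the inverse limit is a closed subset of the product
  have hclosed : IsClosed {x : ∀ i, V i | ∀ i, φ i (x (i + 1)) = x i} := by
    have heq : {x : ∀ i, V i | ∀ i, φ i (x (i + 1)) = x i} =
        ⋂ i, {x : ∀ i, V i | φ i (x (i + 1)) = x i} := by
      ext x; simp
    rw [heq]
    exact isClosed_iInter fun i => isClosed_eq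
      (continuous_of_discreteTopology.comp (continuous_apply (i + 1)))
      (continuous_apply i)
  have hcompact : CompactSpace {x : ∀ i, V i // ∀ i, φ i (x (i + 1)) = x i} :=
    isCompact_iff_compactSpace.mp hclosed.isCompact
  refine ⟨hcompact, Topology.IsEmbedding.subtypeVal.metrizableSpace, inferInstance, ?_⟩
  -- successor and predecessor existence
  have hsucc : ∀ i (u : V (i + 1)), ∃ w, (u, w) ∈ E (i + 1) :=
    fun i u => (hedgesurj (i + 1) u).2
  have hpred : ∀ i (u : V (i + 1)), ∃ w, (w, u) ∈ E (i + 1) :=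
    fun i u => (hedgesurj (i + 1) u).1
  set s : ∀ i, V (i + 1) → V i := fun i u => φ i (hsucc i u).choose with hs
  set p : ∀ i, V (i + 1) → V i := fun i u => φ i (hpred i u).choose with hp
  have hs_spec : ∀ i (u w : V (i + 1)), (u, w) ∈ E (i + 1) → s i u = φ i w :=
    fun i u w hw => hbd_out i u _ w (hsucc i u).choose_spec hw
  have hp_spec : ∀ i (u w : V (i + 1)), (w, u) ∈ E (i + 1) → p i u = φ i w :=
    fun i u w hw => hbd_in i _ w u (hpred i u).choose_spec hw
  -- forward map
  have Fcompat : ∀ x : {x : ∀ i, V i // ∀ i, φ i (x (i + 1)) = x i},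
      ∀ i, φ i (s (i + 1) (x.1 (i + 2))) = s i (x.1 (i + 1)) := by
    intro x i
    have hw' := (hsucc (i + 1) (x.1 (i + 2))).choose_spec
    have h1 : (x.1 (i + 1), s (i + 1) (x.1 (i + 2))) ∈ E (i + 1) := by
      have := hhom (i + 1) _ _ hw'
      rwa [x.2 (i + 1)] at this
    exact (hs_spec i (x.1 (i + 1)) _ h1).symm
  have Gcompat : ∀ x : {x : ∀ i, V i // ∀ i, φ i (x (i + 1)) = x i},
      ∀ i, φ i (p (i + 1) (x.1 (i + 2))) = p i (x.1 (i + 1)) := by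
    intro x i
    have hw' := (hpred (i + 1) (x.1 (i + 2))).choose_spec
    have h1 : (p (i + 1) (x.1 (i + 2)), x.1 (i + 1)) ∈ E (i + 1) := by
      have := hhom (i + 1) _ _ hw'
      rwa [x.2 (i + 1)] at this
    exact (hp_spec i (x.1 (i + 1)) _ h1).symm
  set F : {x : ∀ i, V i // ∀ i, φ i (x (i + 1)) = x i} →
      {x : ∀ i, V i // ∀ i, φ i (x (i + 1)) = x i} :=
    fun x => ⟨fun i => s i (x.1 (i + 1)), Fcompat x⟩ with hF
  set G : {x : ∀ i, V i // ∀ i, φ i (x (i + 1)) = x i} →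
      {x : ∀ i, V i // ∀ i, φ i (x (i + 1)) = x i} :=
    fun x => ⟨fun i => p i (x.1 (i + 1)), Gcompat x⟩ with hG
  -- edge facts
  have Fedge : ∀ x, ∀ i, (x.1 i, (F x).1 i) ∈ E i := by
    intro x i
    have hw := (hsucc i (x.1 (i + 1))).choose_spec
    have := hhom i _ _ hw
    rwa [x.2 i] at this
  have Gedge : ∀ x, ∀ i, ((G x).1 i, x.1 i) ∈ E i := by
    intro x i
    have hw := (hpred i (x.1 (i + 1))).choose_spec
    have := hhom i _ _ hw
    rwa [x.2 i] at this
  -- uniqueness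
  have Funiq : ∀ x y, (∀ i, (x.1 i, y.1 i) ∈ E i) → y = F x := by
    intro x y hxy
    apply Subtype.ext
    funext i
    have h1 : s i (x.1 (i + 1)) = φ i (y.1 (i + 1)) := hs_spec i _ _ (hxy (i + 1))
    simp only [hF]
    rw [h1, y.2 i]
  have Guniq : ∀ x y, (∀ i, (x.1 i, y.1 i) ∈ E i) → x = G y := by
    intro x y hxy
    apply Subtype.ext
    funext i
    have h1 : p i (y.1 (i + 1)) = φ i (x.1 (i + 1)) := hp_spec i _ _ (hxy (i + 1))
    simp only [hG]
    rw [h1, x.2 i]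
  have hGF : ∀ x, G (F x) = x := fun x => (Guniq x (F x) (Fedge x)).symm
  have hFG : ∀ y, F (G y) = y := fun y => (Funiq (G y) y (Gedge y)).symm
  have hFcont : Continuous F := by
    apply Continuous.subtype_mk
    apply continuous_pi
    intro i
    exact (continuous_of_discreteTopology (f := s i)).comp
      ((continuous_apply (i + 1)).comp continuous_subtype_val)
  have hGcont : Continuous G := by
    apply Continuous.subtype_mk
    apply continuous_pi
    intro i
    exact (continuous_of_discreteTopology (f := p i)).comp
      ((continuous_apply (i + 1)).comp continuous_subtype_val)
  refine ⟨⟨⟨F, G, hGF, hFG⟩, hFcont, hGcont⟩, ?_⟩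
  intro x y
  constructor
  · intro hxy
    exact Funiq x y hxy
  · rintro rfl
    exact Fedge x
end
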